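/- arXiv:1210.3952 — 6 statements merged into one kernel-verified Lean document; each statement's English description precedes it below -/
import Mathlib

section
/- Let Ω ⊆ ℂ be a domain and Π : Ω → ℂ^{d×d} a holomorphic family of projections of rank k. If P₁, P₂ : Ω → ℂ^{d×k} satisfy rank Pᵢ(λ) = k and ℛ(Pᵢ(λ)) = ℛ(Π(λ)) for all λ ∈ Ω (i = 1, 2), then the zero sets coincide: {λ ∈ Ω : det(P₁(λ)ᵀP₁(λ)) = 0} = {λ ∈ Ω : det(P₂(λ)ᵀP₂(λ)) = 0}. Moreover, if P₁ is holomorphic on Ω and det(P₁(·)ᵀP₁(·)) does not vanish identically on Ω, then this common set Λ consists of isolated points of Ω. -/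
open Matrix

private lemma key_det_iff {d k : ℕ} (P : Matrix (Fin d) (Fin k) ℂ) (h : P.rank = k) :
    (Pᵀ * P).det = 0 ↔ ∃ x : Fin d → ℂ, x ≠ 0 ∧ x ∈ LinearMap.range P.mulVecLin ∧
      ∀ u ∈ LinearMap.range P.mulVecLin, u ⬝ᵥ x = 0 := by
  have hinj : Function.Injective P.mulVecLin := by
    rw [← LinearMap.ker_eq_bot]
    have h1 := LinearMap.finrank_range_add_finrank_ker P.mulVecLin
    rw [Matrix.rank] at h
    rw [h] at h1
    have h2 : Module.finrank ℂ (Fin k → ℂ) = k := by simp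
    have h3 : Module.finrank ℂ (LinearMap.ker P.mulVecLin) = 0 := by omega
    exact Submodule.finrank_eq_zero.mp h3
  constructor
  · intro hdet
    obtain ⟨v, hv0, hv⟩ := (Matrix.exists_mulVec_eq_zero_iff).2 hdet
    refine ⟨P.mulVec v, ?_, ⟨v, rfl⟩, ?_⟩
    · intro hx
      apply hv0
      have : P.mulVecLin v = P.mulVecLin 0 := by
        simpa [Matrix.mulVecLin_apply] using hx
      exact hinj this
    · rintro u ⟨w, rfl⟩
      have hPt : Pᵀ.mulVec (P.mulVec v) = 0 := by
        rw [Matrix.mulVec_mulVec]; exact hv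
      simp only [Matrix.mulVecLin_apply]
      rw [dotProduct_comm, Matrix.dotProduct_mulVec, ← Matrix.mulVec_transpose,
        hPt]
      simp
  · rintro ⟨x, hx0, ⟨v, rfl⟩, hperp⟩
    simp only [Matrix.mulVecLin_apply] at hx0 hperp ⊢
    apply Matrix.exists_mulVec_eq_zero_iff.1
    refine ⟨v, fun hv => hx0 (by rw [hv]; simp), ?_⟩
    rw [← Matrix.mulVec_mulVec]
    funext i
    have := hperp (P.mulVec (Pi.single i 1)) ⟨Pi.single i 1, by simp [Matrix.mulVecLin_apply]⟩
    simpa [Matrix.mulVec_single, Matrix.mulVec, dotProduct, Pi.single_apply,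
      mul_ite, mul_one, mul_zero, Finset.sum_ite_eq', Matrix.transpose_apply] using this

private lemma det_diffOn {n : ℕ} {M : ℂ → Matrix (Fin n) (Fin n) ℂ} {s : Set ℂ}
    (h : ∀ i j, DifferentiableOn ℂ (fun z => M z i j) s) :
    DifferentiableOn ℂ (fun z => (M z).det) s := by
  simp only [Matrix.det_apply, Units.smul_def, zsmul_eq_mul]
  apply DifferentiableOn.fun_sum
  intro σ _
  exact (differentiableOn_const _).mul
    (DifferentiableOn.fun_finset_prod (fun i _ => h (σ i) i))

/-- For a holomorphic family of rank-`k` projections `Π` on a domain `Ω`,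
if `P₁, P₂ : Ω → ℂ^{d×k}` have rank `k` and `ℛ(Pᵢ(λ)) = ℛ(Π(λ))` on `Ω`, then the
zero sets of `det(Pᵢ(·)ᵀPᵢ(·))` coincide; moreover, if `P₁` is holomorphic and
`det(P₁(·)ᵀP₁(·))` does not vanish identically on `Ω`, this common set consists of
isolated points of `Ω`. -/
theorem stmt4 (d k : ℕ) (Ω : Set ℂ) (hΩo : IsOpen Ω) (hΩconn : IsConnected Ω)
    (Pr : ℂ → Matrix (Fin d) (Fin d) ℂ)
    (hPrHol : ∀ i j, DifferentiableOn ℂ (fun z => Pr z i j) Ω)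
    (hproj : ∀ z ∈ Ω, Pr z * Pr z = Pr z)
    (hrank : ∀ z ∈ Ω, (Pr z).rank = k)
    (P₁ P₂ : ℂ → Matrix (Fin d) (Fin k) ℂ)
    (hP₁ : ∀ z ∈ Ω, (P₁ z).rank = k ∧
      LinearMap.range (P₁ z).mulVecLin = LinearMap.range (Pr z).mulVecLin)
    (hP₂ : ∀ z ∈ Ω, (P₂ z).rank = k ∧
      LinearMap.range (P₂ z).mulVecLin = LinearMap.range (Pr z).mulVecLin) :
    ({z ∈ Ω | ((P₁ z)ᵀ * P₁ z).det = 0} = {z ∈ Ω | ((P₂ z)ᵀ * P₂ z).det = 0}) ∧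
    ((∀ i j, DifferentiableOn ℂ (fun z => P₁ z i j) Ω) →
      (∃ z ∈ Ω, ((P₁ z)ᵀ * P₁ z).det ≠ 0) →
      ∀ z₀ ∈ {z ∈ Ω | ((P₁ z)ᵀ * P₁ z).det = 0}, ∃ r > 0,
        ∀ w ∈ {z ∈ Ω | ((P₁ z)ᵀ * P₁ z).det = 0}, w ∈ Metric.ball z₀ r → w = z₀) := by
  constructor
  · ext z
    simp only [Set.mem_setOf_eq]
    constructor
    · rintro ⟨hz, hdet⟩
      refine ⟨hz, ?_⟩
      rw [key_det_iff _ (hP₁ z hz).1, (hP₁ z hz).2] at hdet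
      rw [key_det_iff _ (hP₂ z hz).1, (hP₂ z hz).2]
      exact hdet
    · rintro ⟨hz, hdet⟩
      refine ⟨hz, ?_⟩
      rw [key_det_iff _ (hP₂ z hz).1, (hP₂ z hz).2] at hdet
      rw [key_det_iff _ (hP₁ z hz).1, (hP₁ z hz).2]
      exact hdet
  · intro hHol hne z₀ hz₀
    obtain ⟨hz₀Ω, hz₀det⟩ := hz₀
    set f : ℂ → ℂ := fun z => ((P₁ z)ᵀ * P₁ z).det with hf
    have hfdiff : DifferentiableOn ℂ f Ω := by
      apply det_diffOn
      intro i j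
      simp only [Matrix.mul_apply, Matrix.transpose_apply]
      exact DifferentiableOn.fun_sum fun l _ => (hHol l i).mul (hHol l j)
    have hfa : AnalyticOnNhd ℂ f Ω := hfdiff.analyticOnNhd hΩo
    by_contra hcon
    push_neg at hcon
    have hfreq : ∃ᶠ z in nhdsWithin z₀ {z₀}ᶜ, f z = 0 := by
      rw [Metric.nhdsWithin_basis_ball.frequently_iff]
      intro r hr
      obtain ⟨w, ⟨hwΩ, hwdet⟩, hwball, hwne⟩ := hcon r hr
      exact ⟨w, ⟨hwball, hwne⟩, hwdet⟩
    have := hfa.eqOn_zero_of_preconnected_of_frequently_eq_zero hΩconn.isPreconnected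
      hz₀Ω hfreq
    obtain ⟨z, hzΩ, hzne⟩ := hne
    exact hzne (this hzΩ)
end

section
/- Let Ω ⊆ ℂ be a domain, let P : Ω → ℂ^{d×k} and Q : Ω → ℂ^{d×(d−k)} be holomorphic with rank P(λ) = k and rank Q(λ) = d−k for all λ ∈ Ω, set 𝒴(λ) = (P(λ)|Q(λ)) and ℰ(λ) = det 𝒴(λ), and let 𝒴_U, 𝒴_V : Ω → ℂ^{d×d} be the unique holomorphic maps with ℰ(λ)I_d = 𝒴_U(λ) + 𝒴_V(λ) satisfying ℛ(𝒴_U(λ)) = ℛ(P(λ)), 𝒩(𝒴_U(λ)) = ℛ(Q(λ)), ℛ(𝒴_V(λ)) = ℛ(Q(λ)), 𝒩(𝒴_V(λ)) = ℛ(P(λ)) whenever ℰ(λ) ≠ 0. Suppose λ₀ ∈ Ω is a simple zero of ℰ, i.e. ℰ(λ₀) = 0 and ℰ'(λ₀) ≠ 0. Then there are nonzero vectors v₀, w₀ ∈ ℂ^d with 𝒩(𝒴(λ₀)) = span{v₀} and 𝒩(𝒴(λ₀)ᵀ) = span{w₀}; writing v₀ = (v₀,₁, v₀,₂) with v₀,₁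 ∈ ℂ^k, v₀,₂ ∈ ℂ^{d−k}, the vector w₀ can be normalized so that w₀ᵀ𝒴'(λ₀)v₀ = 1, and then 𝒴_U(λ₀) = ℰ'(λ₀)·P(λ₀)v₀,₁·w₀ᵀ = −ℰ'(λ₀)·Q(λ₀)v₀,₂·w₀ᵀ = −𝒴_V(λ₀). Moreover, if v₀ is normalized so that v₀ᵀv₀ = 1, then ℰ'(λ₀) = v₀ᵀ · adj(𝒴(λ₀)) · 𝒴'(λ₀) · v₀, where adj denotes the adjugate matrix. -/
open Matrix Finset

lemma my_jacobi {n : Type*} [Fintype n] [DecidableEq n] {Y : ℂ → Matrix n n ℂ} {z₀ : ℂ}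
    {Y' : Matrix n n ℂ} (h : ∀ i j, HasDerivAt (fun z => Y z i j) (Y' i j) z₀) :
    HasDerivAt (fun z => (Y z).det) ((adjugate (Y z₀) * Y').trace) z₀ := by
  have key : HasDerivAt (fun z => (Y z).det)
      (∑ σ : Equiv.Perm n, ((Equiv.Perm.sign σ : ℤ) : ℂ) *
        ∑ i, (∏ j ∈ univ.erase i, Y z₀ (σ j) j) • Y' (σ i) i) z₀ := by
    simp only [Matrix.det_apply']
    exact HasDerivAt.fun_sum fun σ _ =>
      (HasDerivAt.fun_finsetProd (fun i _ => h (σ i) i)).const_mul _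
  convert key using 1
  have hupdate : ∀ i : n, (adjugate (Y z₀) * Y') i i
      = ∑ σ : Equiv.Perm n, ((Equiv.Perm.sign σ : ℤ) : ℂ) *
          ((∏ j ∈ univ.erase i, Y z₀ (σ j) j) • Y' (σ i) i) := by
    intro i
    have h1 : (adjugate (Y z₀) * Y') i i = ((Y z₀).updateCol i (fun r => Y' r i)).det := by
      rw [← Matrix.cramer_apply, Matrix.cramer_eq_adjugate_mulVec]
      simp [Matrix.mul_apply, Matrix.mulVec, dotProduct]
    rw [h1, Matrix.det_apply']
    refine Finset.sum_congr rfl fun σ _ => ?_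
    congr 1
    rw [← Finset.mul_prod_erase univ _ (Finset.mem_univ i)]
    rw [smul_eq_mul, mul_comm]
    congr 1
    · exact Finset.prod_congr rfl fun j hj =>
        Matrix.updateCol_ne (Finset.ne_of_mem_erase hj)
    · exact Matrix.updateCol_self ..
  rw [Matrix.trace]
  simp only [Matrix.diag]
  rw [Finset.sum_congr rfl fun i _ => hupdate i]
  rw [Finset.sum_comm]
  refine Finset.sum_congr rfl fun σ _ => ?_
  rw [Finset.mul_sum]

lemma my_ker_span {n : Type*} [Fintype n] [DecidableEq n] (Y : Matrix n n ℂ)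
    (hdet : Y.det = 0) (i₀ j₀ : n) (h : Y.adjugate i₀ j₀ ≠ 0) :
    LinearMap.ker Y.mulVecLin = Submodule.span ℂ {fun i => Y.adjugate i j₀} := by
  set v : n → ℂ := fun i => Y.adjugate i j₀ with hv
  have hYv : Y *ᵥ v = 0 := by
    ext i
    have : (Y * Y.adjugate) i j₀ = 0 := by rw [Matrix.mul_adjugate, hdet]; simp
    simpa [Matrix.mul_apply, Matrix.mulVec, dotProduct, hv] using this
  apply le_antisymm
  · intro u hu
    rw [LinearMap.mem_ker, Matrix.mulVecLin_apply] at hu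
    set M := Y.updateRow j₀ (Pi.single i₀ 1) with hM
    have hMdet : M.det = Y.adjugate i₀ j₀ := (Matrix.adjugate_apply Y i₀ j₀).symm
    have hMu : IsUnit M.det := isUnit_iff_ne_zero.2 (hMdet ▸ h)
    have key : ∀ x : n → ℂ, Y *ᵥ x = 0 → x i₀ = 0 → x = 0 := by
      intro x hx hxi
      have hMx : M *ᵥ x = 0 := by
        ext j
        by_cases hj : j = j₀
        · subst hj
          simp only [Matrix.mulVec, dotProduct, hM, Matrix.updateRow_self]
          simpa [Pi.single_apply] using hxi
        · have : M j = Y j := Matrix.updateRow_ne hj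
          calc (M *ᵥ x) j = (Y *ᵥ x) j := by simp [Matrix.mulVec, this]
            _ = 0 := by rw [hx]; rfl
      calc x = M⁻¹ *ᵥ (M *ᵥ x) := by
              rw [Matrix.mulVec_mulVec, Matrix.nonsing_inv_mul _ hMu, Matrix.one_mulVec]
        _ = 0 := by rw [hMx, Matrix.mulVec_zero]
    have hvi : v i₀ ≠ 0 := h
    have hz : u - (u i₀ / v i₀) • v = 0 := by
      apply key
      · rw [Matrix.mulVec_sub, hu, Matrix.mulVec_smul, hYv, smul_zero, sub_zero]
      · simp only [Pi.sub_apply, Pi.smul_apply, smul_eq_mul]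
        field_simp
        ring
    rw [Submodule.mem_span_singleton]
    exact ⟨u i₀ / v i₀, (sub_eq_zero.1 hz).symm⟩
  · rw [Submodule.span_le, Set.singleton_subset_iff]
    exact LinearMap.mem_ker.2 (by rw [Matrix.mulVecLin_apply]; exact hYv)

lemma my_mul_vecMulVec {m n : Type*} [Fintype m] (M : Matrix n m ℂ) (u : m → ℂ) (w : n → ℂ) :
    M * vecMulVec u w = vecMulVec (M *ᵥ u) w := by
  ext i j
  simp [Matrix.mul_apply, vecMulVec_apply, Matrix.mulVec, dotProduct, Finset.sum_mul, mul_assoc]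

lemma my_vecMulVec_mulVec {m n : Type*} [Fintype n] (u : m → ℂ) (w : n → ℂ) (x : n → ℂ) :
    vecMulVec u w *ᵥ x = (w ⬝ᵥ x) • u := by
  ext i
  simp [Matrix.mulVec, vecMulVec_apply, dotProduct, Finset.mul_sum, mul_assoc]
  rw [Finset.sum_mul]
  exact Finset.sum_congr rfl fun j _ => by ring

lemma my_vecMulVec_neg {m n : Type*} (u : m → ℂ) (w : n → ℂ) :
    vecMulVec (-u) w = -vecMulVec u w := by
  ext i j; simp [vecMulVec_apply]

lemma my_vecMulVec_smul {m n : Type*} (c : ℂ) (u : m → ℂ) (w : n → ℂ) :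
    vecMulVec u (c • w) = c • vecMulVec u w := by
  ext i j; simp [vecMulVec_apply]; ring

/-- Behavior of `𝒴_U, 𝒴_V` at a simple zero `z₀` of the Evans function
`ℰ(λ) = det 𝒴(λ)`, `𝒴(λ) = (P(λ)|Q(λ))`. Here `d = k + l`, `ℂ^d` is modeled as
`Fin k ⊕ Fin l → ℂ`, `v₀,₁ = v₀ ∘ Sum.inl`, `v₀,₂ = v₀ ∘ Sum.inr`, `E'` is `ℰ'(z₀)` and
`Y'` the entrywise derivative `𝒴'(z₀)`. -/
theorem stmt8 (k l : ℕ) (Ω : Set ℂ) (hΩo : IsOpen Ω) (hΩconn : IsConnected Ω)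
    (P : ℂ → Matrix (Fin k ⊕ Fin l) (Fin k) ℂ)
    (Q : ℂ → Matrix (Fin k ⊕ Fin l) (Fin l) ℂ)
    (hPhol : ∀ i j, DifferentiableOn ℂ (fun z => P z i j) Ω)
    (hQhol : ∀ i j, DifferentiableOn ℂ (fun z => Q z i j) Ω)
    (hPrank : ∀ z ∈ Ω, (P z).rank = k)
    (hQrank : ∀ z ∈ Ω, (Q z).rank = l)
    (YU YV : ℂ → Matrix (Fin k ⊕ Fin l) (Fin k ⊕ Fin l) ℂ)
    (hYUhol : ∀ i j, DifferentiableOn ℂ (fun z => YU z i j) Ω)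
    (hYVhol : ∀ i j, DifferentiableOn ℂ (fun z => YV z i j) Ω)
    (hsum : ∀ z ∈ Ω,
      (Matrix.fromCols (P z) (Q z)).det •
        (1 : Matrix (Fin k ⊕ Fin l) (Fin k ⊕ Fin l) ℂ) = YU z + YV z)
    (hUV : ∀ z ∈ Ω, (Matrix.fromCols (P z) (Q z)).det ≠ 0 →
      LinearMap.range (YU z).mulVecLin = LinearMap.range (P z).mulVecLin ∧
      LinearMap.ker (YU z).mulVecLin = LinearMap.range (Q z).mulVecLin ∧
      LinearMap.range (YV z).mulVecLin = LinearMap.range (Q z).mulVecLin ∧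
      LinearMap.ker (YV z).mulVecLin = LinearMap.range (P z).mulVecLin)
    (z₀ : ℂ) (hz₀ : z₀ ∈ Ω)
    (E' : ℂ) (Y' : Matrix (Fin k ⊕ Fin l) (Fin k ⊕ Fin l) ℂ)
    (hEzero : (Matrix.fromCols (P z₀) (Q z₀)).det = 0)
    (hE' : HasDerivAt (fun z => (Matrix.fromCols (P z) (Q z)).det) E' z₀)
    (hE'ne : E' ≠ 0)
    (hY' : ∀ i j, HasDerivAt (fun z => Matrix.fromCols (P z) (Q z) i j) (Y' i j) z₀) :
    ∃ v₀ w₀ : Fin k ⊕ Fin l → ℂ, v₀ ≠ 0 ∧ w₀ ≠ 0 ∧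
      LinearMap.ker (Matrix.fromCols (P z₀) (Q z₀)).mulVecLin = Submodule.span ℂ {v₀} ∧
      LinearMap.ker ((Matrix.fromCols (P z₀) (Q z₀))ᵀ).mulVecLin = Submodule.span ℂ {w₀} ∧
      w₀ ⬝ᵥ (Y' *ᵥ v₀) = 1 ∧
      YU z₀ = E' • Matrix.vecMulVec (P z₀ *ᵥ fun a => v₀ (Sum.inl a)) w₀ ∧
      YU z₀ = -(E' • Matrix.vecMulVec (Q z₀ *ᵥ fun b => v₀ (Sum.inr b)) w₀) ∧
      YU z₀ = -YV z₀ ∧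
      (v₀ ⬝ᵥ v₀ = 1 →
        E' = v₀ ⬝ᵥ (((Matrix.fromCols (P z₀) (Q z₀)).adjugate * Y') *ᵥ v₀)) := by
  classical
  set Yf : ℂ → Matrix (Fin k ⊕ Fin l) (Fin k ⊕ Fin l) ℂ :=
    fun z => fromCols (P z) (Q z) with hYfdef
  set A := (Yf z₀).adjugate with hAdef
  -- Jacobi's formula
  have hjac : HasDerivAt (fun z => (Yf z).det) ((A * Y').trace) z₀ := my_jacobi hY'
  have hEtr : E' = (A * Y').trace := hE'.unique hjac
  have hAne : A ≠ 0 := by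
    intro h0
    exact hE'ne (by rw [hEtr, h0, Matrix.zero_mul, Matrix.trace_zero])
  have hex : ∃ i j, A i j ≠ 0 := by
    by_contra hc
    push_neg at hc
    exact hAne (by ext i j; simpa using hc i j)
  obtain ⟨i₀, j₀, hA0⟩ := hex
  set v : Fin k ⊕ Fin l → ℂ := fun i => A i j₀ with hvdef
  set w : Fin k ⊕ Fin l → ℂ := fun j => A i₀ j with hwdef
  -- kernels
  have hkerv : LinearMap.ker (Yf z₀).mulVecLin = Submodule.span ℂ {v} :=
    my_ker_span (Yf z₀) hEzero i₀ j₀ hA0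
  have hkerw : LinearMap.ker ((Yf z₀)ᵀ).mulVecLin = Submodule.span ℂ {w} := by
    have hdt : ((Yf z₀)ᵀ).det = 0 := by rw [Matrix.det_transpose]; exact hEzero
    have hadT : ((Yf z₀)ᵀ).adjugate = Aᵀ := (Matrix.adjugate_transpose (Yf z₀)).symm
    have h2 : ((Yf z₀)ᵀ).adjugate j₀ i₀ ≠ 0 := by rw [hadT]; exact hA0
    have := my_ker_span ((Yf z₀)ᵀ) hdt j₀ i₀ h2
    rw [this]
    congr 1
    ext j
    rw [hadT]
    rfl
  have hYv : Yf z₀ *ᵥ v = 0 := by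
    have : v ∈ LinearMap.ker (Yf z₀).mulVecLin := by
      rw [hkerv]; exact Submodule.mem_span_singleton_self v
    simpa using LinearMap.mem_ker.1 this
  -- rank-one structure of the adjugate
  have hrk1 : ∀ i j, A i₀ j₀ * A i j = A i j₀ * A i₀ j := by
    intro i j
    have hcol : (fun r => A r j) ∈ LinearMap.ker (Yf z₀).mulVecLin := by
      rw [LinearMap.mem_ker, Matrix.mulVecLin_apply]
      ext r
      have : (Yf z₀ * A) r j = 0 := by rw [hAdef, Matrix.mul_adjugate, hEzero]; simp
      simpa [Matrix.mul_apply, Matrix.mulVec, dotProduct] using this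
    rw [hkerv, Submodule.mem_span_singleton] at hcol
    obtain ⟨c, hc⟩ := hcol
    have h1 : A i j = c * A i j₀ := by
      have := congrFun hc i
      simpa [hvdef] using this.symm
    have h2 : A i₀ j = c * A i₀ j₀ := by
      have := congrFun hc i₀
      simpa [hvdef] using this.symm
    rw [h1, h2]; ring
  have hA : vecMulVec v w = A i₀ j₀ • A := by
    ext i j
    simp only [vecMulVec_apply, Matrix.smul_apply, smul_eq_mul, hvdef, hwdef]
    rw [← hrk1 i j]
  -- trace computations
  have htr1 : (vecMulVec v w * Y').trace = w ⬝ᵥ (Y' *ᵥ v) := by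
    simp only [Matrix.trace, Matrix.diag, Matrix.mul_apply, vecMulVec_apply, dotProduct,
      Matrix.mulVec, Finset.mul_sum]
    rw [Finset.sum_comm]
    exact Finset.sum_congr rfl fun j _ => Finset.sum_congr rfl fun i _ => by ring
  have hs : w ⬝ᵥ (Y' *ᵥ v) = A i₀ j₀ * E' := by
    rw [← htr1, hA, smul_mul_assoc, Matrix.trace_smul, hEtr]
    rfl
  have hsne : w ⬝ᵥ (Y' *ᵥ v) ≠ 0 := by rw [hs]; exact mul_ne_zero hA0 hE'ne
  set c : ℂ := (w ⬝ᵥ (Y' *ᵥ v))⁻¹ with hcdef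
  have hcne : c ≠ 0 := inv_ne_zero hsne
  set w₀ : Fin k ⊕ Fin l → ℂ := c • w with hw₀def
  have hnorm : w₀ ⬝ᵥ (Y' *ᵥ v) = 1 := by
    rw [hw₀def, smul_dotProduct, hcdef, smul_eq_mul, inv_mul_cancel₀ hsne]
  have hAfinal : A = E' • vecMulVec v w₀ := by
    rw [hw₀def, my_vecMulVec_smul, smul_smul]
    have hc' : E' * c = (A i₀ j₀)⁻¹ := by
      rw [hcdef, hs]
      field_simp
    rw [hc', hA, smul_smul, inv_mul_cancel₀ hA0, one_smul]
  -- v nonzero, w₀ nonzero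
  have hvne : v ≠ 0 := by
    intro h0
    exact hA0 (by simpa [hvdef] using congrFun h0 i₀)
  have hw₀ne : w₀ ≠ 0 := by
    intro h0
    have := congrFun h0 j₀
    simp only [hw₀def, Pi.smul_apply, smul_eq_mul, Pi.zero_apply, hwdef] at this
    exact (mul_ne_zero hcne hA0) this
  -- the analytic identification of YU z₀
  have hptwise : ∀ z ∈ Ω, (Yf z).det ≠ 0 →
      YU z = fromCols (P z) 0 * (Yf z).adjugate := by
    intro z hz hd
    obtain ⟨hr1, hk1, hr2, hk2⟩ := hUV z hz hd
    have hdu : IsUnit (Yf z).det := isUnit_iff_ne_zero.2 hd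
    have hvec : ∀ x, YU z *ᵥ x = (fromCols (P z) 0 * (Yf z).adjugate) *ᵥ x := by
      intro x
      set y := (Yf z)⁻¹ *ᵥ x with hy
      have hyelim : y = Sum.elim (fun a => y (Sum.inl a)) (fun b => y (Sum.inr b)) :=
        funext fun t => by cases t <;> rfl
      have hx0 : Yf z *ᵥ y = x := by
        rw [hy, Matrix.mulVec_mulVec, Matrix.mul_nonsing_inv _ hdu, Matrix.one_mulVec]
      have hx : x = P z *ᵥ (fun a => y (Sum.inl a)) + Q z *ᵥ (fun b => y (Sum.inr b)) := by
        rw [← hx0]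
        conv_lhs => rw [hyelim]
        rw [hYfdef]
        exact fromCols_mulVec_sumElim _ _ _ _
      have hQmem : Q z *ᵥ (fun b => y (Sum.inr b)) ∈ LinearMap.range (Q z).mulVecLin :=
        ⟨_, rfl⟩
      rw [← hk1] at hQmem
      have hQ0 : YU z *ᵥ (Q z *ᵥ fun b => y (Sum.inr b)) = 0 := by
        simpa using LinearMap.mem_ker.1 hQmem
      have hPmem : P z *ᵥ (fun a => y (Sum.inl a)) ∈ LinearMap.range (P z).mulVecLin :=
        ⟨_, rfl⟩
      rw [← hk2] at hPmem
      have hV0 : YV z *ᵥ (P z *ᵥ fun a => y (Sum.inl a)) = 0 := by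
        simpa using LinearMap.mem_ker.1 hPmem
      have hsum' := congrArg (fun M : Matrix (Fin k ⊕ Fin l) (Fin k ⊕ Fin l) ℂ =>
        M *ᵥ (P z *ᵥ fun a => y (Sum.inl a))) (hsum z hz)
      simp only [Matrix.add_mulVec, Matrix.smul_mulVec, Matrix.one_mulVec] at hsum'
      rw [hV0, add_zero] at hsum'
      have hadjx : (Yf z).adjugate *ᵥ x = (Yf z).det • y := by
        rw [← hx0, Matrix.mulVec_mulVec, Matrix.adjugate_mul, Matrix.smul_mulVec,
          Matrix.one_mulVec]
      have hrhs : (fromCols (P z) 0 * (Yf z).adjugate) *ᵥ x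
          = (Yf z).det • (P z *ᵥ fun a => y (Sum.inl a)) := by
        rw [← Matrix.mulVec_mulVec, hadjx, Matrix.mulVec_smul]
        congr 1
        conv_lhs => rw [hyelim]
        rw [fromCols_mulVec_sumElim, Matrix.zero_mulVec, add_zero]
      rw [hrhs, hx, Matrix.mulVec_add, hQ0, add_zero, ← hsum']
    ext i j
    have := congrFun (hvec (Pi.single j 1)) i
    simpa using this
  -- continuity
  have hYfc : ContinuousAt Yf z₀ :=
    continuousAt_pi.2 fun i => continuousAt_pi.2 fun j => (hY' i j).continuousAt
  have hPc : ContinuousAt (fun z => fromCols (P z) (0 : Matrix (Fin k ⊕ Fin l) (Fin l) ℂ)) z₀ := by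
    apply continuousAt_pi.2
    intro i
    apply continuousAt_pi.2
    intro j
    cases j with
    | inl a =>
      simp only [Matrix.fromCols_apply_inl]
      exact (hPhol i a).continuousOn.continuousAt (hΩo.mem_nhds hz₀)
    | inr b =>
      simp only [Matrix.fromCols_apply_inr, Matrix.zero_apply]
      exact continuousAt_const
  have hgc : ContinuousAt (fun z => fromCols (P z) 0 * (Yf z).adjugate) z₀ := by
    have hadjc : ContinuousAt (fun z => (Yf z).adjugate) z₀ := by
      have hadj : Continuous (fun M : Matrix (Fin k ⊕ Fin l) (Fin k ⊕ Fin l) ℂ => M.adjugate) :=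
        Continuous.matrix_adjugate continuous_id
      exact hadj.continuousAt.comp hYfc
    exact hPc.mul hadjc
  have hYUc : ContinuousAt YU z₀ :=
    continuousAt_pi.2 fun i => continuousAt_pi.2 fun j =>
      (hYUhol i j).continuousOn.continuousAt (hΩo.mem_nhds hz₀)
  have heq : YU =ᶠ[nhdsWithin z₀ {z₀}ᶜ] (fun z => fromCols (P z) 0 * (Yf z).adjugate) := by
    have h1 := hE'.eventually_ne (c := (fromCols (P z₀) (Q z₀)).det) hE'ne
    have h2 : ∀ᶠ z in nhdsWithin z₀ {z₀}ᶜ, z ∈ Ω :=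
      Filter.Eventually.filter_mono nhdsWithin_le_nhds (hΩo.eventually_mem hz₀)
    filter_upwards [h1, h2] with z hz1 hz2
    exact hptwise z hz2 (fun h0 => hz1 (by rw [h0, hEzero]))
  haveI : (nhdsWithin z₀ {z₀}ᶜ).NeBot := Module.punctured_nhds_neBot ℂ ℂ z₀
  have hYUeq : YU z₀ = fromCols (P z₀) 0 * A := by
    have t1 : Filter.Tendsto YU (nhdsWithin z₀ {z₀}ᶜ) (nhds (YU z₀)) :=
      hYUc.tendsto.mono_left nhdsWithin_le_nhds
    have t2 : Filter.Tendsto (fun z => fromCols (P z) 0 * (Yf z).adjugate)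
        (nhdsWithin z₀ {z₀}ᶜ) (nhds (fromCols (P z₀) 0 * (Yf z₀).adjugate)) :=
      hgc.tendsto.mono_left nhdsWithin_le_nhds
    exact tendsto_nhds_unique_of_eventuallyEq t1 t2 heq
  -- assembling
  have hvelim : v = Sum.elim (fun a => v (Sum.inl a)) (fun b => v (Sum.inr b)) :=
    funext fun t => by cases t <;> rfl
  have hfc : fromCols (P z₀) 0 *ᵥ v = P z₀ *ᵥ (fun a => v (Sum.inl a)) := by
    conv_lhs => rw [hvelim]
    rw [fromCols_mulVec_sumElim, Matrix.zero_mulVec, add_zero]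
  have hPQv : P z₀ *ᵥ (fun a => v (Sum.inl a)) + Q z₀ *ᵥ (fun b => v (Sum.inr b)) = 0 := by
    rw [← fromCols_mulVec_sumElim, ← hvelim]
    exact hYv
  have hgoal1 : YU z₀ = E' • vecMulVec (P z₀ *ᵥ fun a => v (Sum.inl a)) w₀ := by
    rw [hYUeq, hAfinal, Matrix.mul_smul, my_mul_vecMulVec, hfc]
  refine ⟨v, w₀, hvne, hw₀ne, hkerv, ?_, hnorm, hgoal1, ?_, ?_, ?_⟩
  · rw [hkerw, hw₀def]
    exact (Submodule.span_singleton_smul_eq (IsUnit.mk0 c hcne) w).symm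
  · rw [hgoal1]
    have : P z₀ *ᵥ (fun a => v (Sum.inl a)) = -(Q z₀ *ᵥ fun b => v (Sum.inr b)) :=
      eq_neg_of_add_eq_zero_left hPQv
    rw [this, my_vecMulVec_neg, smul_neg]
  · have := hsum z₀ hz₀
    rw [hEzero, zero_smul] at this
    exact eq_neg_of_add_eq_zero_left this.symm
  · intro hvv
    rw [hAfinal, smul_mul_assoc, Matrix.smul_mulVec,
      ← Matrix.mulVec_mulVec, my_vecMulVec_mulVec, hnorm, one_smul,
      dotProduct_smul, hvv]
    simp
end

section
/- Let B : ℝ → ℂ^{d×d} be measurable with ∫_ℝ ‖B(ξ)‖ dξ < ∞ and set K = exp(∫_ℝ ‖B(ξ)‖ dξ). Let J ⊆ ℝ be an interval and let (y, z) be an H_J-pair. Then for all x, x₀ ∈ J: ‖y(x) − y(x₀)‖ ≤ K · (∫_{[x₀,x]} ‖B(ξ)‖ dξ) · ‖y(x₀)‖ + K · √|x − x₀| · (∫_J ‖z(ξ)‖² dξ)^{1/2}, where [x₀,x] denotes the interval between x₀ and x. -/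
set_option maxHeartbeats 1000000


open MeasureTheory intervalIntegral

section Gronwall

open Set

lemma gronwall_fwd {s u : ℝ} (hsu : s ≤ u) {φ b : ℝ → ℝ}
    (hφ : ContinuousOn φ (Set.Icc s u)) (hφ0 : ∀ t ∈ Set.Icc s u, 0 ≤ φ t)
    (hb : IntegrableOn b (Set.Icc s u)) (hb0 : ∀ t, 0 ≤ b t)
    {c : ℝ} (hc : 0 ≤ c)
    (h : ∀ t ∈ Set.Icc s u, φ t ≤ c + ∫ ξ in s..t, b ξ * φ ξ) :
    ∀ t ∈ Set.Icc s u, φ t ≤ c * Real.exp (∫ ξ in s..u, b ξ) := by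
  obtain ⟨M0, hM0⟩ := (isCompact_Icc : IsCompact (Set.Icc s u)).exists_bound_of_continuousOn hφ
  set M := max M0 0 with hMdef
  have hMnn : (0:ℝ) ≤ M := le_max_right _ _
  have hφM : ∀ t ∈ Set.Icc s u, φ t ≤ M := fun t ht =>
    le_trans (le_trans (le_abs_self _) (hM0 t ht)) (le_max_left _ _)
  set L := ∫ ξ in s..u, b ξ with hLdef
  intro t ht
  have key : ∀ ε > (0:ℝ), φ t ≤ (c + M * ε) * Real.exp (L + ε) := by
    intro ε hε
    set b1 : ℝ → ℝ := (Set.Icc s u).indicator b with hb1def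
    have hb1i : Integrable b1 := by
      rw [hb1def, integrable_indicator_iff measurableSet_Icc]; exact hb
    have hb1nn : ∀ ξ, 0 ≤ b1 ξ := fun ξ => Set.indicator_nonneg (fun x _ => hb0 x) ξ
    obtain ⟨g0, -, hg0int, hg0cont, hg0i⟩ := hb1i.exists_hasCompactSupport_integral_sub_le hε
    set g : ℝ → ℝ := fun t => max (g0 t) 0 with hgdef
    have hgc : Continuous g := hg0cont.max continuous_const
    have hgnn : ∀ t, 0 ≤ g t := fun t => le_max_right _ _
    have hgi : Integrable g := by
      refine Integrable.mono' hg0i.abs hgc.aestronglyMeasurable (ae_of_all _ fun ξ => ?_)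
      rw [Real.norm_eq_abs, abs_of_nonneg (hgnn ξ)]
      exact max_le (le_abs_self _) (abs_nonneg _)
    have hdiff : ∀ ξ, |b1 ξ - g ξ| ≤ |b1 ξ - g0 ξ| := by
      intro ξ
      rcases le_or_gt 0 (g0 ξ) with h' | h'
      · have : g ξ = g0 ξ := max_eq_left h'
        rw [this]
      · have hg' : g ξ = 0 := max_eq_right h'.le
        rw [hg', sub_zero, abs_of_nonneg (hb1nn ξ)]
        have := le_abs_self (b1 ξ - g0 ξ)
        linarith
    have habs : Integrable (fun ξ => |b1 ξ - g ξ|) volume := (hb1i.sub hgi).abs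
    have hsub : ∫ ξ, |b1 ξ - g ξ| ≤ ε := by
      calc ∫ ξ, |b1 ξ - g ξ| ≤ ∫ ξ, |b1 ξ - g0 ξ| := by
            refine integral_mono (hb1i.sub hgi).abs (hb1i.sub hg0i).abs hdiff
        _ ≤ ε := by simpa [Real.norm_eq_abs] using hg0int
    -- extension of φ
    set φh : ℝ → ℝ := Set.IccExtend hsu ((Set.Icc s u).restrict φ) with hφhdef
    have hφhc : Continuous φh :=
      Continuous.Icc_extend' (continuousOn_iff_continuous_restrict.mp hφ)
    have hφh_eq : ∀ τ ∈ Set.Icc s u, φh τ = φ τ := fun τ hτ => by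
      rw [hφhdef, Set.IccExtend_of_mem hsu _ hτ]; rfl
    have hφh0 : ∀ τ, 0 ≤ φh τ := fun τ => hφ0 _ (Set.projIcc s u hsu τ).2
    have hφhM : ∀ τ, φh τ ≤ M := fun τ => hφM _ (Set.projIcc s u hsu τ).2
    have hgφ : Continuous fun ξ => g ξ * φh ξ := hgc.mul hφhc
    set E : ℝ → ℝ := fun τ => ∫ ξ in s..τ, g ξ with hEdef
    set F : ℝ → ℝ := fun τ => c + M * ε + ∫ ξ in s..τ, g ξ * φh ξ with hFdef
    have hFd : ∀ τ, HasDerivAt F (g τ * φh τ) τ := fun τ =>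
      ((hgφ.integral_hasStrictDerivAt s τ).hasDerivAt).const_add _
    have hEd : ∀ τ, HasDerivAt E (g τ) τ := fun τ =>
      (hgc.integral_hasStrictDerivAt s τ).hasDerivAt
    -- tail bound
    have tail : ∀ τ, s ≤ τ → ∫ ξ in s..τ, |b1 ξ - g ξ| ≤ ε := by
      intro τ hsτ
      calc ∫ ξ in s..τ, |b1 ξ - g ξ| = ∫ ξ in Set.Ioc s τ, |b1 ξ - g ξ| :=
            integral_of_le hsτ
        _ ≤ ∫ ξ, |b1 ξ - g ξ| :=
            setIntegral_le_integral habs (ae_of_all _ fun ξ => abs_nonneg _)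
        _ ≤ ε := hsub
    have hb1φ_int : Integrable fun ξ => b1 ξ * φh ξ := by
      refine Integrable.mono' (hb1i.const_mul M)
        (hb1i.aestronglyMeasurable.mul hφhc.aestronglyMeasurable) (ae_of_all _ fun ξ => ?_)
      rw [Real.norm_eq_abs, abs_of_nonneg (mul_nonneg (hb1nn ξ) (hφh0 ξ))]
      calc b1 ξ * φh ξ ≤ b1 ξ * M := mul_le_mul_of_nonneg_left (hφhM ξ) (hb1nn ξ)
        _ = M * b1 ξ := mul_comm _ _
    -- claim : φ ≤ F on Icc s u
    have hclaim : ∀ τ ∈ Set.Icc s u, φ τ ≤ F τ := by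
      intro τ hτ
      have hsτ : s ≤ τ := hτ.1
      have hbφ_eq : ∫ ξ in s..τ, b ξ * φ ξ = ∫ ξ in s..τ, b1 ξ * φh ξ := by
        refine intervalIntegral.integral_congr fun ξ hξ => ?_
        have hξ' : ξ ∈ Set.Icc s u := by
          rw [Set.uIcc_of_le hsτ] at hξ
          exact Set.Icc_subset_Icc le_rfl hτ.2 hξ
        rw [hb1def, Set.indicator_of_mem hξ' b, hφh_eq ξ hξ']
      have hRHSint : IntervalIntegrable (fun ξ => g ξ * φh ξ + M * |b1 ξ - g ξ|) volume s τ :=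
        (hgφ.intervalIntegrable _ _).add ((habs.const_mul M).intervalIntegrable)
      have mono : ∫ ξ in s..τ, b1 ξ * φh ξ ≤
          ∫ ξ in s..τ, (g ξ * φh ξ + M * |b1 ξ - g ξ|) := by
        refine intervalIntegral.integral_mono_on hsτ hb1φ_int.intervalIntegrable
          hRHSint fun ξ _ => ?_
        have h1 : (b1 ξ - g ξ) * φh ξ ≤ |b1 ξ - g ξ| * φh ξ :=
          mul_le_mul_of_nonneg_right (le_abs_self _) (hφh0 ξ)
        have h2 : |b1 ξ - g ξ| * φh ξ ≤ |b1 ξ - g ξ| * M :=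
          mul_le_mul_of_nonneg_left (hφhM ξ) (abs_nonneg _)
        nlinarith
      have split : ∫ ξ in s..τ, (g ξ * φh ξ + M * |b1 ξ - g ξ|) =
          (∫ ξ in s..τ, g ξ * φh ξ) + ∫ ξ in s..τ, M * |b1 ξ - g ξ| :=
        intervalIntegral.integral_add (hgφ.intervalIntegrable _ _)
          ((habs.const_mul M).intervalIntegrable)
      have tail' : ∫ ξ in s..τ, M * |b1 ξ - g ξ| ≤ M * ε := by
        rw [intervalIntegral.integral_const_mul]
        exact mul_le_mul_of_nonneg_left (tail τ hsτ) hMnn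
      calc φ τ ≤ c + ∫ ξ in s..τ, b ξ * φ ξ := h τ hτ
        _ = c + ∫ ξ in s..τ, b1 ξ * φh ξ := by rw [hbφ_eq]
        _ ≤ c + ((∫ ξ in s..τ, g ξ * φh ξ) + M * ε) := by
            have hm := mono
            rw [split] at hm
            linarith [tail']
        _ = F τ := by simp only [hFdef]; ring
    -- H is antitone
    set H : ℝ → ℝ := fun τ => F τ * Real.exp (-E τ) with hHdef
    have hHd : ∀ τ, HasDerivAt H ((g τ * φh τ - g τ * F τ) * Real.exp (-E τ)) τ := by
      intro τ
      have h2 : HasDerivAt (fun τ => Real.exp (-E τ)) (Real.exp (-E τ) * -g τ) τ :=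
        by have := (Real.hasDerivAt_exp (-E τ)).comp τ ((hEd τ).neg); exact this
      have := (hFd τ).mul h2
      show HasDerivAt (fun τ => F τ * Real.exp (-E τ)) _ τ
      refine this.congr_deriv ?_
      ring
    have hHanti : AntitoneOn H (Set.Icc s u) := by
      apply antitoneOn_of_deriv_nonpos (convex_Icc s u)
      · exact (continuous_iff_continuousAt.mpr fun τ => (hHd τ).continuousAt).continuousOn
      · intro τ _
        exact (hHd τ).differentiableAt.differentiableWithinAt
      · intro τ hτ
        rw [interior_Icc] at hτ
        rw [(hHd τ).deriv]
        have hφF : φh τ ≤ F τ := by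
          rw [hφh_eq τ (Set.Ioo_subset_Icc_self hτ)]
          exact hclaim τ (Set.Ioo_subset_Icc_self hτ)
        have h3 : g τ * φh τ - g τ * F τ ≤ 0 := by
          nlinarith [mul_le_mul_of_nonneg_left hφF (hgnn τ)]
        exact mul_nonpos_of_nonpos_of_nonneg h3 (Real.exp_pos _).le
    have hHt : H t ≤ H s := hHanti (Set.left_mem_Icc.mpr hsu) ht ht.1
    have hHs : H s = c + M * ε := by
      simp [hHdef, hFdef, hEdef, intervalIntegral.integral_same]
    have hcM : (0:ℝ) ≤ c + M * ε := by positivity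
    have hFt : F t ≤ (c + M * ε) * Real.exp (E t) := by
      have h4 : F t * Real.exp (-E t) ≤ c + M * ε := by rw [← hHs]; exact hHt
      have h5 := mul_le_mul_of_nonneg_right h4 (Real.exp_pos (E t)).le
      rw [mul_assoc, ← Real.exp_add, neg_add_cancel, Real.exp_zero, mul_one] at h5
      exact h5
    have hEt : E t ≤ L + ε := by
      have e1 : E t ≤ (∫ ξ in s..t, b1 ξ) + ∫ ξ in s..t, |b1 ξ - g ξ| := by
        have : E t ≤ ∫ ξ in s..t, (b1 ξ + |b1 ξ - g ξ|) := by
          refine intervalIntegral.integral_mono_on ht.1 (hgi.intervalIntegrable)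
            ((hb1i.add habs).intervalIntegrable) fun ξ _ => ?_
          have := le_abs_self (g ξ - b1 ξ)
          rw [abs_sub_comm] at this
          linarith
        rw [intervalIntegral.integral_add hb1i.intervalIntegrable
          habs.intervalIntegrable] at this
        exact this
      have e2 : ∫ ξ in s..t, b1 ξ ≤ L := by
        rw [integral_of_le ht.1, hLdef, integral_of_le hsu]
        have heq2 : ∫ ξ in Set.Ioc s u, b1 ξ = ∫ ξ in Set.Ioc s u, b ξ := by
          refine setIntegral_congr_fun measurableSet_Ioc fun ξ hξ => ?_
          simp only [hb1def]
          exact Set.indicator_of_mem (Set.Ioc_subset_Icc_self hξ) b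
        rw [← heq2]
        refine setIntegral_mono_set hb1i.integrableOn
          (ae_of_all _ fun ξ => hb1nn ξ)
          (HasSubset.Subset.eventuallyLE (Set.Ioc_subset_Ioc_right ht.2))
      linarith [tail t ht.1]
    calc φ t ≤ F t := hclaim t ht
      _ ≤ (c + M * ε) * Real.exp (E t) := hFt
      _ ≤ (c + M * ε) * Real.exp (L + ε) :=
          mul_le_mul_of_nonneg_left (Real.exp_le_exp.mpr hEt) hcM
  have hlim : Filter.Tendsto (fun ε : ℝ => (c + M * ε) * Real.exp (L + ε))
      (nhdsWithin 0 (Set.Ioi 0)) (nhds (c * Real.exp L)) := by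
    have hcont : Continuous fun ε : ℝ => (c + M * ε) * Real.exp (L + ε) := by
      continuity
    have h0 := hcont.tendsto 0
    simp only [mul_zero, add_zero] at h0
    exact h0.mono_left nhdsWithin_le_nhds
  exact ge_of_tendsto hlim (eventually_nhdsWithin_of_forall fun ε hε => key ε hε)

lemma gronwall_bwd {s u : ℝ} (hsu : s ≤ u) {φ b : ℝ → ℝ}
    (hφ : ContinuousOn φ (Set.Icc s u)) (hφ0 : ∀ t ∈ Set.Icc s u, 0 ≤ φ t)
    (hb : IntegrableOn b (Set.Icc s u)) (hb0 : ∀ t, 0 ≤ b t)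
    {c : ℝ} (hc : 0 ≤ c)
    (h : ∀ t ∈ Set.Icc s u, φ t ≤ c + ∫ ξ in t..u, b ξ * φ ξ) :
    ∀ t ∈ Set.Icc s u, φ t ≤ c * Real.exp (∫ ξ in s..u, b ξ) := by
  intro t ht
  have hneg : (-u) ≤ (-s) := neg_le_neg hsu
  have hmem : ∀ σ ∈ Set.Icc (-u) (-s), -σ ∈ Set.Icc s u := fun σ hσ =>
    ⟨by linarith [hσ.2], by linarith [hσ.1]⟩
  have hφ' : ContinuousOn (fun σ => φ (-σ)) (Set.Icc (-u) (-s)) :=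
    hφ.comp continuous_neg.continuousOn hmem
  have hφ0' : ∀ σ ∈ Set.Icc (-u) (-s), 0 ≤ φ (-σ) := fun σ hσ => hφ0 _ (hmem σ hσ)
  have hbI : IntervalIntegrable b volume s u :=
    (intervalIntegrable_iff_integrableOn_Icc_of_le hsu).mpr hb
  have hbI' : IntervalIntegrable (fun σ => b (-σ)) volume (-u) (-s) :=
    ((IntervalIntegrable.iff_comp_neg (by simp)).mp hbI).symm
  have hb' : IntegrableOn (fun σ => b (-σ)) (Set.Icc (-u) (-s)) :=
    (intervalIntegrable_iff_integrableOn_Icc_of_le hneg).mp hbI'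
  have hb0' : ∀ σ, 0 ≤ b (-σ) := fun σ => hb0 _
  have h' : ∀ σ ∈ Set.Icc (-u) (-s),
      φ (-σ) ≤ c + ∫ ξ in (-u)..σ, b (-ξ) * φ (-ξ) := by
    intro σ hσ
    have := h (-σ) (hmem σ hσ)
    have hcv : (∫ ξ in (-u)..σ, b (-ξ) * φ (-ξ)) = ∫ ξ in (-σ)..u, b ξ * φ ξ := by
      rw [intervalIntegral.integral_comp_neg (fun ξ => b ξ * φ ξ)]
      norm_num
    rw [hcv]
    exact this
  have key := gronwall_fwd hneg hφ' hφ0' hb' hb0' hc h' (-t)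
    ⟨by linarith [ht.2], by linarith [ht.1]⟩
  have hcv2 : (∫ ξ in (-u)..(-s), b (-ξ)) = ∫ ξ in s..u, b ξ := by
    rw [intervalIntegral.integral_comp_neg b]
    norm_num
  rw [neg_neg, hcv2] at key
  exact key

end Gronwall

/-- An `H_J`-pair for the coefficient `B` on an interval `J ⊆ ℝ`: `y : J → ℂ^d` is
continuous, `z` is measurable with `∫_J ‖z‖² < ∞`, and
`y(x) = y(x₀) + ∫_{x₀}^x (B(ξ)y(ξ) − z(ξ)) dξ` for all `x, x₀ ∈ J` (encoding that `y` is
locally absolutely continuous with `−y' + By = z` a.e. on `J`).  Vectors are modeled in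
`EuclideanSpace ℂ (Fin d)` and matrices as its continuous linear endomorphisms. -/
def IsHJPair (d : ℕ)
    (B : ℝ → (EuclideanSpace ℂ (Fin d) →L[ℂ] EuclideanSpace ℂ (Fin d)))
    (J : Set ℝ) (y z : ℝ → EuclideanSpace ℂ (Fin d)) : Prop :=
  ContinuousOn y J ∧
  AEStronglyMeasurable z (volume.restrict J) ∧
  IntegrableOn (fun ξ => ‖z ξ‖ ^ 2) J ∧
  ∀ x ∈ J, ∀ x₀ ∈ J, y x = y x₀ + ∫ ξ in x₀..x, (B ξ (y ξ) - z ξ)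

/-- For integrable `B` with `K = exp(∫_ℝ ‖B‖)`, an interval `J ⊆ ℝ` and an
`H_J`-pair `(y,z)`, for all `x, x₀ ∈ J`:
`‖y(x) − y(x₀)‖ ≤ K (∫_{[x₀,x]} ‖B‖) ‖y(x₀)‖ + K √|x−x₀| (∫_J ‖z‖²)^{1/2}`. -/
theorem stmt16 (d : ℕ)
    (B : ℝ → (EuclideanSpace ℂ (Fin d) →L[ℂ] EuclideanSpace ℂ (Fin d)))
    (hB : Integrable B)
    (J : Set ℝ) (hJ : J.OrdConnected)
    (y z : ℝ → EuclideanSpace ℂ (Fin d))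
    (hpair : IsHJPair d B J y z) :
    ∀ x ∈ J, ∀ x₀ ∈ J,
      ‖y x - y x₀‖ ≤
        Real.exp (∫ ξ, ‖B ξ‖) * (∫ ξ in Set.uIcc x₀ x, ‖B ξ‖) * ‖y x₀‖ +
        Real.exp (∫ ξ, ‖B ξ‖) * Real.sqrt |x - x₀| *
          Real.sqrt (∫ ξ in J, ‖z ξ‖ ^ 2) := by
  intro x hx x₀ hx₀
  obtain ⟨hy, hzm, hz2, heq⟩ := hpair
  have hb : Integrable (fun ξ => ‖B ξ‖) := hB.norm
  have hb0 : ∀ t : ℝ, (0:ℝ) ≤ ‖B t‖ := fun t => norm_nonneg _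
  set S := Set.uIcc x₀ x with hSdef
  have hSJ : S ⊆ J := hJ.uIcc_subset hx₀ hx
  have hSm : MeasurableSet S := measurableSet_uIcc
  set φ : ℝ → ℝ := fun t => ‖y t - y x₀‖ with hφdef
  have hφJ : ContinuousOn φ J := (hy.sub continuousOn_const).norm
  have hφ0 : ∀ t, 0 ≤ φ t := fun t => norm_nonneg _
  have hrle : volume.restrict S ≤ volume.restrict J := Measure.restrict_mono hSJ le_rfl
  have hzmS : AEStronglyMeasurable z (volume.restrict S) := hzm.mono_measure hrle
  have hz2S : IntegrableOn (fun ξ => ‖z ξ‖^2) S := hz2.mono_set hSJ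
  have hSfin : volume S < ⊤ := by
    rw [hSdef, Real.volume_interval]; exact ENNReal.ofReal_lt_top
  have hznorm : IntegrableOn (fun ξ => ‖z ξ‖) S := by
    refine Integrable.mono' (g := fun ξ => 1 + ‖z ξ‖^2)
      (by have h1 := ((integrableOn_const_iff (C := (1:ℝ)) (by simp)).mpr (Or.inr hSfin)).add hz2S; exact h1) hzmS.norm (ae_of_all _ fun ξ => ?_)
    show ‖‖z ξ‖‖ ≤ 1 + ‖z ξ‖ ^ 2
    rw [Real.norm_eq_abs, abs_of_nonneg (norm_nonneg _)]
    nlinarith [norm_nonneg (z ξ), sq_nonneg (‖z ξ‖ - 1)]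
  -- bounds for y and φ on S
  obtain ⟨My, hMy⟩ := (isCompact_uIcc : IsCompact S).exists_bound_of_continuousOn (hy.mono hSJ)
  obtain ⟨Mφ, hMφ⟩ := (isCompact_uIcc : IsCompact S).exists_bound_of_continuousOn (hφJ.mono hSJ)
  -- measurability
  have hyS : AEStronglyMeasurable y (volume.restrict S) := (hy.mono hSJ).aestronglyMeasurable hSm
  have hφS : AEStronglyMeasurable φ (volume.restrict S) :=
    ((hφJ.mono hSJ)).aestronglyMeasurable hSm
  have hBym : AEStronglyMeasurable (fun ξ => B ξ (y ξ)) (volume.restrict S) := by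
    have hcont : Continuous fun p : (EuclideanSpace ℂ (Fin d) →L[ℂ] EuclideanSpace ℂ (Fin d)) ×
        EuclideanSpace ℂ (Fin d) => p.1 p.2 := isBoundedBilinearMap_apply.continuous
    exact hcont.comp_aestronglyMeasurable ((hB.aestronglyMeasurable.restrict).prodMk hyS)
  -- integrabilities
  have hBy_int : IntegrableOn (fun ξ => ‖B ξ‖ * ‖y ξ‖) S := by
    refine Integrable.mono' (g := fun ξ => ‖B ξ‖ * max My 0)
      (hb.integrableOn.mul_const _)
      (hb.aestronglyMeasurable.restrict.mul hyS.norm) ?_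
    refine (ae_restrict_iff' hSm).mpr (ae_of_all _ fun ξ hξ => ?_)
    rw [Real.norm_eq_abs, abs_of_nonneg (mul_nonneg (norm_nonneg _) (norm_nonneg _))]
    exact mul_le_mul_of_nonneg_left (le_trans (hMy ξ hξ) (le_max_left _ _)) (norm_nonneg _)
  have hbφ_int : IntegrableOn (fun ξ => ‖B ξ‖ * φ ξ) S := by
    refine Integrable.mono' (g := fun ξ => ‖B ξ‖ * max Mφ 0)
      (hb.integrableOn.mul_const _)
      (hb.aestronglyMeasurable.restrict.mul hφS) ?_
    refine (ae_restrict_iff' hSm).mpr (ae_of_all _ fun ξ hξ => ?_)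
    rw [Real.norm_eq_abs, abs_of_nonneg (mul_nonneg (norm_nonneg _) (hφ0 ξ))]
    refine mul_le_mul_of_nonneg_left ?_ (norm_nonneg _)
    exact le_trans (le_trans (le_abs_self _) (hMφ ξ hξ)) (le_max_left _ _)
  have hf_int : IntegrableOn (fun ξ => ‖B ξ (y ξ) - z ξ‖) S := by
    refine Integrable.mono' (g := fun ξ => ‖B ξ‖ * ‖y ξ‖ + ‖z ξ‖)
      (hBy_int.add hznorm) (hBym.sub hzmS).norm (ae_of_all _ fun ξ => ?_)
    rw [Real.norm_eq_abs, abs_of_nonneg (norm_nonneg _)]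
    exact le_trans (norm_sub_le _ _) (add_le_add_left ((B ξ).le_opNorm (y ξ)) _)
  have hrhs_int : IntegrableOn (fun ξ => ‖B ξ‖ * ‖y x₀‖ + ‖z ξ‖) S :=
    (hb.integrableOn.mul_const _).add hznorm
  set c : ℝ := ∫ ξ in S, (‖B ξ‖ * ‖y x₀‖ + ‖z ξ‖) with hcdef
  have hc : 0 ≤ c := setIntegral_nonneg hSm fun ξ _ =>
    add_nonneg (mul_nonneg (norm_nonneg _) (norm_nonneg _)) (norm_nonneg _)
  -- key pointwise integral inequality
  have hkey : ∀ t ∈ S, φ t ≤ c + ∫ ξ in Set.uIcc x₀ t, ‖B ξ‖ * φ ξ := by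
    intro t ht
    have hsub : Set.uIcc x₀ t ⊆ S := Set.uIcc_subset_uIcc Set.left_mem_uIcc ht
    have hmsub : MeasurableSet (Set.uIcc x₀ t) := measurableSet_uIcc
    have hyt : y t - y x₀ = ∫ ξ in x₀..t, (B ξ (y ξ) - z ξ) := by
      rw [heq t (hSJ ht) x₀ hx₀]; abel
    have step1 : φ t ≤ ∫ ξ in Set.uIcc x₀ t, ‖B ξ (y ξ) - z ξ‖ := by
      rw [hφdef]
      simp only
      rw [hyt]
      refine le_trans intervalIntegral.norm_integral_le_abs_integral_norm ?_
      rcases le_total x₀ t with h' | h'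
      · rw [integral_of_le h',
          abs_of_nonneg (setIntegral_nonneg measurableSet_Ioc fun ξ _ => norm_nonneg _),
          ← integral_Icc_eq_integral_Ioc, Set.uIcc_of_le h']
      · rw [integral_symm, abs_neg, integral_of_le h',
          abs_of_nonneg (setIntegral_nonneg measurableSet_Ioc fun ξ _ => norm_nonneg _),
          ← integral_Icc_eq_integral_Ioc, Set.uIcc_of_ge h']
    have step2 : ∫ ξ in Set.uIcc x₀ t, ‖B ξ (y ξ) - z ξ‖ ≤
        ∫ ξ in Set.uIcc x₀ t, (‖B ξ‖ * φ ξ + (‖B ξ‖ * ‖y x₀‖ + ‖z ξ‖)) := by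
      refine setIntegral_mono_on (hf_int.mono_set hsub)
        ((hbφ_int.mono_set hsub).add (hrhs_int.mono_set hsub)) hmsub fun ξ _ => ?_
      have h1 : ‖B ξ (y ξ) - z ξ‖ ≤ ‖B ξ‖ * ‖y ξ‖ + ‖z ξ‖ :=
        le_trans (norm_sub_le _ _) (add_le_add_left ((B ξ).le_opNorm (y ξ)) _)
      have h2 : ‖y ξ‖ ≤ φ ξ + ‖y x₀‖ := by
        show ‖y ξ‖ ≤ ‖y ξ - y x₀‖ + ‖y x₀‖
        linarith [norm_le_norm_add_norm_sub' (y ξ) (y x₀)]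
      nlinarith [norm_nonneg (B ξ), mul_le_mul_of_nonneg_left h2 (norm_nonneg (B ξ))]
    have step3 : ∫ ξ in Set.uIcc x₀ t, (‖B ξ‖ * φ ξ + (‖B ξ‖ * ‖y x₀‖ + ‖z ξ‖)) =
        (∫ ξ in Set.uIcc x₀ t, ‖B ξ‖ * φ ξ) +
          ∫ ξ in Set.uIcc x₀ t, (‖B ξ‖ * ‖y x₀‖ + ‖z ξ‖) :=
      integral_add (hbφ_int.mono_set hsub) (hrhs_int.mono_set hsub)
    have step4 : ∫ ξ in Set.uIcc x₀ t, (‖B ξ‖ * ‖y x₀‖ + ‖z ξ‖) ≤ c := by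
      rw [hcdef]
      refine setIntegral_mono_set hrhs_int (ae_of_all _ fun ξ => ?_)
        (HasSubset.Subset.eventuallyLE hsub)
      exact add_nonneg (mul_nonneg (norm_nonneg _) (norm_nonneg _)) (norm_nonneg _)
    calc φ t ≤ ∫ ξ in Set.uIcc x₀ t, ‖B ξ (y ξ) - z ξ‖ := step1
      _ ≤ _ := step2
      _ = _ := step3
      _ ≤ (∫ ξ in Set.uIcc x₀ t, ‖B ξ‖ * φ ξ) + c := by linarith
      _ = c + ∫ ξ in Set.uIcc x₀ t, ‖B ξ‖ * φ ξ := add_comm _ _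
  -- apply Gronwall in both directions
  have hIbound : ∀ a' b' : ℝ, a' ≤ b' → (∫ ξ in a'..b', ‖B ξ‖) ≤ ∫ ξ, ‖B ξ‖ := by
    intro a' b' hab
    rw [integral_of_le hab]
    exact setIntegral_le_integral hb (ae_of_all _ fun ξ => norm_nonneg _)
  have hmain : φ x ≤ c * Real.exp (∫ ξ, ‖B ξ‖) := by
    rcases le_total x₀ x with hxx | hxx
    · have hSIcc : S = Set.Icc x₀ x := by rw [hSdef, Set.uIcc_of_le hxx]
      have hgr := gronwall_fwd hxx (φ := φ) (b := fun ξ => ‖B ξ‖)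
        (by rw [← hSIcc]; exact hφJ.mono hSJ)
        (fun t _ => hφ0 t) (by rw [← hSIcc]; exact hb.integrableOn) hb0 hc
        (fun t htt => by
          have hk := hkey t (by rw [hSIcc]; exact htt)
          rwa [Set.uIcc_of_le htt.1, integral_Icc_eq_integral_Ioc,
            ← integral_of_le htt.1] at hk)
        x (Set.right_mem_Icc.mpr hxx)
      exact le_trans hgr (mul_le_mul_of_nonneg_left
        (Real.exp_le_exp.mpr (hIbound _ _ hxx)) hc)
    · have hSIcc : S = Set.Icc x x₀ := by rw [hSdef, Set.uIcc_of_ge hxx]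
      have hgr := gronwall_bwd hxx (φ := φ) (b := fun ξ => ‖B ξ‖)
        (by rw [← hSIcc]; exact hφJ.mono hSJ)
        (fun t _ => hφ0 t) (by rw [← hSIcc]; exact hb.integrableOn) hb0 hc
        (fun t htt => by
          have hk := hkey t (by rw [hSIcc]; exact htt)
          rwa [Set.uIcc_of_ge htt.2, integral_Icc_eq_integral_Ioc,
            ← integral_of_le htt.2] at hk)
        x (Set.left_mem_Icc.mpr hxx)
      exact le_trans hgr (mul_le_mul_of_nonneg_left
        (Real.exp_le_exp.mpr (hIbound _ _ hxx)) hc)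
  -- Cauchy-Schwarz for z
  have hQJ : (0:ℝ) ≤ ∫ ξ in J, ‖z ξ‖^2 := integral_nonneg fun ξ => sq_nonneg _
  have hZ : (∫ ξ in S, ‖z ξ‖) ≤ Real.sqrt |x - x₀| * Real.sqrt (∫ ξ in J, ‖z ξ‖^2) := by
    haveI : IsFiniteMeasure (volume.restrict S) :=
      ⟨by rwa [Measure.restrict_apply_univ]⟩
    have hpq : Real.HolderConjugate 2 2 := Real.HolderConjugate.two_two
    have hone : MemLp (fun _ : ℝ => (1:ℝ)) (ENNReal.ofReal 2) (volume.restrict S) :=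
      memLp_const 1
    have h2e : (ENNReal.ofReal 2) = (2 : ENNReal) := by norm_num
    have hr2 : ∀ r : ℝ, r ^ (2:ℝ) = r ^ 2 := fun r => by
      rw [show (2:ℝ) = ((2:ℕ):ℝ) by norm_num, Real.rpow_natCast]
    have hzL2 : MemLp (fun ξ => ‖z ξ‖) (ENNReal.ofReal 2) (volume.restrict S) := by
      rw [h2e]
      exact (memLp_two_iff_integrable_sq hzmS.norm).mpr hz2S
    have hCS := integral_mul_le_Lp_mul_Lq_of_nonneg hpq
      (ae_of_all _ fun _ => (zero_le_one : (0:ℝ) ≤ 1))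
      (ae_of_all _ fun ξ => norm_nonneg (z ξ)) hone hzL2
    calc (∫ ξ in S, ‖z ξ‖) = ∫ ξ in S, 1 * ‖z ξ‖ := by simp
      _ ≤ (∫ ξ in S, (1:ℝ) ^ (2:ℝ)) ^ (1/(2:ℝ)) *
            (∫ ξ in S, ‖z ξ‖ ^ (2:ℝ)) ^ (1/(2:ℝ)) := hCS
      _ = Real.sqrt |x - x₀| * Real.sqrt (∫ ξ in S, ‖z ξ‖^2) := by
          congr 1
          · simp only [Real.one_rpow]
            rw [MeasureTheory.integral_const, smul_eq_mul, mul_one, measureReal_def, Measure.restrict_apply_univ,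
              hSdef, Real.volume_interval, ENNReal.toReal_ofReal (abs_nonneg _),
              ← Real.sqrt_eq_rpow]
          · rw [← Real.sqrt_eq_rpow]
            congr 1
            simp_rw [hr2]
      _ ≤ Real.sqrt |x - x₀| * Real.sqrt (∫ ξ in J, ‖z ξ‖^2) := by
          refine mul_le_mul_of_nonneg_left (Real.sqrt_le_sqrt ?_) (Real.sqrt_nonneg _)
          exact setIntegral_mono_set hz2 (ae_of_all _ fun ξ => sq_nonneg _)
            (HasSubset.Subset.eventuallyLE hSJ)
  -- final assembly
  have hcexp : c = (∫ ξ in S, ‖B ξ‖) * ‖y x₀‖ + ∫ ξ in S, ‖z ξ‖ := by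
    rw [hcdef, integral_add (hb.integrableOn.mul_const _) hznorm, MeasureTheory.integral_mul_const]
  have hA : (0:ℝ) ≤ ∫ ξ in S, ‖B ξ‖ := setIntegral_nonneg hSm fun ξ _ => norm_nonneg _
  have hfin := hmain
  rw [hcexp] at hfin
  have hexp : (0:ℝ) < Real.exp (∫ ξ, ‖B ξ‖) := Real.exp_pos _
  calc ‖y x - y x₀‖ = φ x := rfl
    _ ≤ ((∫ ξ in S, ‖B ξ‖) * ‖y x₀‖ + ∫ ξ in S, ‖z ξ‖) * Real.exp (∫ ξ, ‖B ξ‖) := hfin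
    _ ≤ _ := by nlinarith [hZ, hexp, hA, norm_nonneg (y x₀),
        Real.sqrt_nonneg |x - x₀|, Real.sqrt_nonneg (∫ ξ in J, ‖z ξ‖^2)]
end

section
/- Let B : ℝ → ℂ^{d×d} be measurable with ∫_ℝ ‖B(ξ)‖ dξ < ∞, and let (y, z) be an H_ℝ-pair with ∫_ℝ ‖y(ξ)‖² dξ < ∞. Then y(x) → 0 as x → +∞ and y(x) → 0 as x → −∞. (In the paper's notation: the space H = {y ∈ L²(ℝ,ℂ^d) : y ∈ AC_loc, −y' + By ∈ L²(ℝ,ℂ^d)} is contained in C₀(ℝ,ℂ^d), the continuous functions vanishing at ±∞.) -/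
open MeasureTheory intervalIntegral

set_option maxHeartbeats 1000000

lemma tail0 {f : ℝ → ℝ} (hf : Integrable f) :
    Filter.Tendsto (fun a => ∫ x in Set.Ici a, f x) Filter.atTop (nhds 0) := by
  have h := tendsto_setIntegral_of_antitone (μ := volume) (f := f)
    (s := fun a : ℝ => Set.Ici a) (fun i => measurableSet_Ici)
    (fun i j hij => Set.Ici_subset_Ici.2 hij) ⟨0, hf.integrableOn⟩
  have he : ⋂ a : ℝ, Set.Ici a = (∅ : Set ℝ) := by
    apply Set.eq_empty_of_forall_notMem
    intro x hx
    have := Set.mem_iInter.1 hx (x + 1)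
    simp only [Set.mem_Ici] at this
    linarith
  rw [he] at h
  simpa using h

set_option maxHeartbeats 1000000 in
lemma aux_atTop (d : ℕ)
    (B : ℝ → (EuclideanSpace ℂ (Fin d) →L[ℂ] EuclideanSpace ℂ (Fin d)))
    (hB : Integrable B)
    (y z : ℝ → EuclideanSpace ℂ (Fin d))
    (hpair : IsHJPair d B Set.univ y z)
    (hy2 : Integrable (fun ξ => ‖y ξ‖ ^ 2)) :
    Filter.Tendsto y Filter.atTop (nhds 0) := by
  obtain ⟨hycont, hzm, hz2, heq⟩ := hpair
  have hyc : Continuous y := continuousOn_univ.mp hycont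
  rw [integrableOn_univ] at hz2
  rw [Measure.restrict_univ] at hzm
  have hBym : AEStronglyMeasurable (fun ξ => B ξ (y ξ)) volume :=
    isBoundedBilinearMap_apply.continuous.comp_aestronglyMeasurable
      (hB.aestronglyMeasurable.prodMk hyc.aestronglyMeasurable)
  rw [NormedAddCommGroup.tendsto_nhds_zero]
  intro ε hε
  set δ : ℝ := ε / 8 with hδdef
  have hδ : 0 < δ := by positivity
  have hev : ∀ᶠ a : ℝ in Filter.atTop,
      ((∫ ξ in Set.Ici a, ‖B ξ‖) < 1/2 ∧ (∫ ξ in Set.Ici a, ‖y ξ‖ ^ 2) < δ ^ 2) ∧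
      (∫ ξ in Set.Ici a, ‖z ξ‖ ^ 2) < δ ^ 2 :=
    (((tendsto_order.1 (tail0 hB.norm)).2 _ (by norm_num)).and
      ((tendsto_order.1 (tail0 hy2)).2 _ (by positivity))).and
      ((tendsto_order.1 (tail0 hz2)).2 _ (by positivity))
  obtain ⟨a, ⟨hBa, hya⟩, hza⟩ := hev.exists
  filter_upwards [Filter.eventually_ge_atTop (a + 1)] with x hx
  set I : Set ℝ := Set.Icc (x - 1) x with hIdef
  have hIne : x - 1 ≤ x := by linarith
  have hxI : x ∈ I := ⟨hIne, le_refl x⟩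
  have hIsub : I ⊆ Set.Ici a := fun r hr => le_trans (by linarith) hr.1
  have hμI : volume I = 1 := by
    rw [hIdef, Real.volume_Icc]
    norm_num
  have hμIlt : volume I < ⊤ := by rw [hμI]; exact ENNReal.one_lt_top
  obtain ⟨q, hqI, hq⟩ := isCompact_Icc.exists_isMaxOn ⟨x, hxI⟩ (hyc.norm.continuousOn)
  have hq' : ∀ r ∈ I, ‖y r‖ ≤ ‖y q‖ := fun r hr => hq hr
  obtain ⟨p, hpI, hp⟩ := isCompact_Icc.exists_isMinOn ⟨x, hxI⟩ (hyc.norm.continuousOn)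
  have hp' : ∀ r ∈ I, ‖y p‖ ≤ ‖y r‖ := fun r hr => hp hr
  have hyple : ‖y p‖ ^ 2 ≤ ∫ ξ in I, ‖y ξ‖ ^ 2 := by
    have h := setIntegral_ge_of_const_le (μ := volume) (c := ‖y p‖ ^ 2) measurableSet_Icc
      (by rw [hμI]; exact ENNReal.one_ne_top)
      (fun r hr => pow_le_pow_left₀ (norm_nonneg _) (hp' r hr) 2) hy2.integrableOn
    rwa [measureReal_def, hμI, ENNReal.toReal_one, one_smul] at h
  have hyI : (∫ ξ in I, ‖y ξ‖ ^ 2) ≤ ∫ ξ in Set.Ici a, ‖y ξ‖ ^ 2 :=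
    setIntegral_mono_set hy2.integrableOn (ae_of_all _ fun r => by positivity)
      (HasSubset.Subset.eventuallyLE hIsub)
  have hyp : ‖y p‖ ≤ δ := by nlinarith [norm_nonneg (y p)]
  have hconst1 : IntegrableOn (fun _ : ℝ => (1:ℝ)) I := integrableOn_const hμIlt.ne
  have hg1 : IntegrableOn (fun ξ => (1 + ‖z ξ‖ ^ 2) / 2) I :=
    (hconst1.add hz2.integrableOn).div_const 2
  have hzint : IntegrableOn z I := by
    refine hg1.mono' hzm.restrict (ae_of_all _ fun r => ?_)
    nlinarith [sq_nonneg (‖z r‖ - 1)]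
  have hByint : IntegrableOn (fun ξ => B ξ (y ξ)) I := by
    refine Integrable.mono' (g := fun ξ => ‖B ξ‖ * ‖y q‖)
      ((hB.norm.mul_const _).integrableOn) (hBym.restrict) ?_
    rw [ae_restrict_iff' measurableSet_Icc]
    refine ae_of_all _ fun r hr => ?_
    calc ‖B r (y r)‖ ≤ ‖B r‖ * ‖y r‖ := (B r).le_opNorm _
    _ ≤ ‖B r‖ * ‖y q‖ := mul_le_mul_of_nonneg_left (hq' r hr) (norm_nonneg _)
  have hfint : IntegrableOn (fun ξ => B ξ (y ξ) - z ξ) I := hByint.sub hzint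
  have hyq : y q = y p + ∫ ξ in p..q, (B ξ (y ξ) - z ξ) :=
    heq q (Set.mem_univ q) p (Set.mem_univ p)
  have hsub : Set.uIoc p q ⊆ I := fun r hr =>
    Set.uIcc_subset_Icc hpI hqI (Set.Ioc_subset_Icc_self hr)
  have h1 : ‖y q‖ ≤ ‖y p‖ + ∫ ξ in I, ‖B ξ (y ξ) - z ξ‖ := by
    rw [hyq]
    refine (norm_add_le _ _).trans (add_le_add_right ?_ _)
    calc ‖∫ ξ in p..q, (B ξ (y ξ) - z ξ)‖
        ≤ ∫ ξ in Set.uIoc p q, ‖B ξ (y ξ) - z ξ‖ :=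
          intervalIntegral.norm_integral_le_integral_norm_uIoc
      _ ≤ ∫ ξ in I, ‖B ξ (y ξ) - z ξ‖ :=
          setIntegral_mono_set hfint.norm (ae_of_all _ fun r => norm_nonneg _)
            (HasSubset.Subset.eventuallyLE hsub)
  have h2 : (∫ ξ in I, ‖B ξ (y ξ) - z ξ‖) ≤ ∫ ξ in I, (‖B ξ‖ * ‖y q‖ + ‖z ξ‖) :=
    setIntegral_mono_on hfint.norm ((hB.norm.mul_const _).integrableOn.add hzint.norm)
      measurableSet_Icc (fun r hr => (norm_sub_le _ _).trans (add_le_add_left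
        (le_trans ((B r).le_opNorm _)
          (mul_le_mul_of_nonneg_left (hq' r hr) (norm_nonneg _))) _))
  have h3 : (∫ ξ in I, (‖B ξ‖ * ‖y q‖ + ‖z ξ‖))
      = (∫ ξ in I, ‖B ξ‖) * ‖y q‖ + ∫ ξ in I, ‖z ξ‖ := by
    rw [integral_add ((hB.norm.mul_const _).integrableOn) hzint.norm, MeasureTheory.integral_mul_const]
  have hBI : (∫ ξ in I, ‖B ξ‖) ≤ 1/2 :=
    le_of_lt (lt_of_le_of_lt (setIntegral_mono_set hB.norm.integrableOn
      (ae_of_all _ fun r => norm_nonneg _) (HasSubset.Subset.eventuallyLE hIsub)) hBa)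
  have hzI : (∫ ξ in I, ‖z ξ‖) ≤ δ := by
    have hb : (∫ ξ in I, ‖z ξ‖) ≤ ∫ ξ in I, (δ/2 + ‖z ξ‖ ^ 2 / (2*δ)) :=
      setIntegral_mono_on hzint.norm
        ((integrableOn_const hμIlt.ne).add (hz2.integrableOn.div_const _))
        measurableSet_Icc (fun r hr => by
          have h2δ : (0:ℝ) < 2 * δ := by positivity
          have key : ‖z r‖ ≤ (δ ^ 2 + ‖z r‖ ^ 2) / (2 * δ) := by
            rw [le_div_iff₀ h2δ]
            nlinarith [sq_nonneg (‖z r‖ - δ)]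
          have heq2 : (δ ^ 2 + ‖z r‖ ^ 2) / (2 * δ) = δ / 2 + ‖z r‖ ^ 2 / (2 * δ) := by
            field_simp
          linarith)
    have hc : (∫ ξ in I, (δ/2 + ‖z ξ‖ ^ 2 / (2*δ)))
        = δ/2 + (∫ ξ in I, ‖z ξ‖ ^ 2) / (2*δ) := by
      rw [integral_add (integrableOn_const (C := δ/2) hμIlt.ne) (hz2.integrableOn.div_const _),
        setIntegral_const, measureReal_def, hμI]
      simp only [ENNReal.toReal_one, one_smul]
      rw [MeasureTheory.integral_div]
    have hzI2 : (∫ ξ in I, ‖z ξ‖ ^ 2) ≤ δ ^ 2 :=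
      le_of_lt (lt_of_le_of_lt (setIntegral_mono_set hz2.integrableOn
        (ae_of_all _ fun r => by positivity) (HasSubset.Subset.eventuallyLE hIsub)) hza)
    have hd : (∫ ξ in I, ‖z ξ‖ ^ 2) / (2*δ) ≤ δ/2 := by
      rw [div_le_iff₀ (by positivity)]
      nlinarith
    linarith
  have hBq : (∫ ξ in I, ‖B ξ‖) * ‖y q‖ ≤ (1/2) * ‖y q‖ :=
    mul_le_mul_of_nonneg_right hBI (norm_nonneg _)
  have h4 : (∫ ξ in I, ‖B ξ (y ξ) - z ξ‖) ≤ (1/2) * ‖y q‖ + δ := by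
    rw [h3] at h2; linarith
  have hyqb : ‖y q‖ ≤ 4 * δ := by linarith
  have h5 : ‖y x‖ ≤ ‖y q‖ := hq' x hxI
  rw [hδdef] at hyqb
  linarith

/-- For integrable `B` and an `H_ℝ`-pair `(y,z)` with `∫_ℝ ‖y‖² < ∞`,
one has `y(x) → 0` as `x → +∞` and as `x → −∞` (the space `H` embeds into
`C₀(ℝ, ℂ^d)`). -/
theorem stmt17 (d : ℕ)
    (B : ℝ → (EuclideanSpace ℂ (Fin d) →L[ℂ] EuclideanSpace ℂ (Fin d)))
    (hB : Integrable B)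
    (y z : ℝ → EuclideanSpace ℂ (Fin d))
    (hpair : IsHJPair d B Set.univ y z)
    (hy2 : Integrable (fun ξ => ‖y ξ‖ ^ 2)) :
    Filter.Tendsto y Filter.atTop (nhds 0) ∧
    Filter.Tendsto y Filter.atBot (nhds 0) := by
  refine ⟨aux_atTop d B hB y z hpair hy2, ?_⟩
  have hyc : Continuous y := continuousOn_univ.mp hpair.1
  have hzm0 : AEStronglyMeasurable z volume := by
    have := hpair.2.1; rwa [Measure.restrict_univ] at this
  have hz20 : Integrable (fun ξ => ‖z ξ‖ ^ 2) := by
    have := hpair.2.2.1; rwa [integrableOn_univ] at this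
  have hN : MeasurePreserving (fun x : ℝ => -x) volume volume :=
    Measure.measurePreserving_neg _
  have hNe : MeasurableEmbedding (fun x : ℝ => -x) :=
    (Homeomorph.neg ℝ).isClosedEmbedding.measurableEmbedding
  have hB' : Integrable (fun ξ : ℝ => -B (-ξ)) :=
    ((hN.integrable_comp_emb hNe).2 hB).neg
  have hpair' : IsHJPair d (fun ξ : ℝ => -B (-ξ)) Set.univ
      (fun ξ => y (-ξ)) (fun ξ => -z (-ξ)) := by
    refine ⟨(hyc.comp continuous_neg).continuousOn, ?_, ?_, ?_⟩
    · rw [Measure.restrict_univ]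
      exact (hzm0.comp_quasiMeasurePreserving hN.quasiMeasurePreserving).neg
    · rw [integrableOn_univ]
      have h := (hN.integrable_comp_emb hNe).2 hz20
      simpa [Function.comp_def] using h
    · intro x _ x₀ _
      have h0 := hpair.2.2.2 (-x) (Set.mem_univ _) (-x₀) (Set.mem_univ _)
      have key : (∫ ξ in x₀..x, ((fun ξ : ℝ => -B (-ξ)) ξ ((fun ξ => y (-ξ)) ξ)
            - (fun ξ => -z (-ξ)) ξ))
          = ∫ ξ in -x₀..-x, (B ξ (y ξ) - z ξ) :=
        calc (∫ ξ in x₀..x, ((fun ξ : ℝ => -B (-ξ)) ξ ((fun ξ => y (-ξ)) ξ)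
              - (fun ξ => -z (-ξ)) ξ))
            = ∫ ξ in x₀..x, -((fun t => B t (y t) - z t) (-ξ)) := by
              apply intervalIntegral.integral_congr
              intro ξ _
              simp only [ContinuousLinearMap.neg_apply, Pi.neg_apply]
              abel
          _ = -∫ ξ in x₀..x, (fun t => B t (y t) - z t) (-ξ) :=
              intervalIntegral.integral_neg
          _ = -∫ ξ in -x..-x₀, (B ξ (y ξ) - z ξ) := by
              rw [intervalIntegral.integral_comp_neg (a := x₀) (b := x)
                (fun t : ℝ => B t (y t) - z t)]
          _ = ∫ ξ in -x₀..-x, (B ξ (y ξ) - z ξ) :=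
              (intervalIntegral.integral_symm (-x) (-x₀)).symm
      show y (-x) = y (-x₀) + _
      rw [key]
      exact h0
  have hy2' : Integrable (fun ξ : ℝ => ‖y (-ξ)‖ ^ 2) := by
    have h := (hN.integrable_comp_emb hNe).2 hy2
    simpa [Function.comp_def] using h
  have ht := aux_atTop d _ hB' _ _ hpair' hy2'
  have hcomp := ht.comp Filter.tendsto_neg_atBot_atTop
  simp only [Function.comp_def, neg_neg] at hcomp
  exact hcomp
end

section
/- Let B : ℝ → ℂ^{d×d} be measurable with ∫_ℝ ‖B(ξ)‖ dξ < ∞. Then there exists a constant C > 0, depending only on B, such that for every compact interval J = [a, b] with b − a ≥ 1 and also for J = ℝ, and every H_J-pair (y, z) with ∫_J ‖y‖² < ∞, one has sup_{x ∈ J} ‖y(x)‖ ≤ C · (∫_J ‖y(ξ)‖² dξ + ∫_J ‖z(ξ)‖² dξ)^{1/2}. (In the paper's notation: ‖y‖_{L^∞(J)} ≤ C ‖y‖_{H_J} with C independent of J.) -/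
open MeasureTheory intervalIntegral

lemma hj_key {d : ℕ} {B : ℝ → (EuclideanSpace ℂ (Fin d) →L[ℂ] EuclideanSpace ℂ (Fin d))}
    (hB : Integrable B) {J : Set ℝ} {y z : ℝ → EuclideanSpace ℂ (Fin d)}
    (hpair : IsHJPair d B J y z) (hy2 : IntegrableOn (fun ξ => ‖y ξ‖ ^ 2) J)
    {c x : ℝ} (hIJ : Set.Icc c (c + 1) ⊆ J) (hx : x ∈ Set.Icc c (c + 1)) :
    ‖y x‖ ≤ (3 * 2 ^ (⌈2 * ∫ t, ‖B t‖⌉₊ + 1)) *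
      Real.sqrt ((∫ ξ in J, ‖y ξ‖ ^ 2) + ∫ ξ in J, ‖z ξ‖ ^ 2) := by
  obtain ⟨hyc, hzm, hz2, heq⟩ := hpair
  set I : Set ℝ := Set.Icc c (c + 1) with hIdef
  have hIcpt : IsCompact I := isCompact_Icc
  have hIne : I.Nonempty := Set.nonempty_Icc.mpr (by linarith)
  have hvolI : volume I = 1 := by
    rw [hIdef, Real.volume_Icc]; norm_num
  have hfin : IsFiniteMeasure (volume.restrict I) :=
    ⟨by rw [Measure.restrict_apply_univ, hvolI]; exact ENNReal.one_lt_top⟩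
  have hycI : ContinuousOn y I := hyc.mono hIJ
  have hβ : Integrable (fun t => ‖B t‖) := hB.norm
  have hβnn : ∀ t, (0:ℝ) ≤ ‖B t‖ := fun t => norm_nonneg _
  -- integrability of z on I
  have hzmI : AEStronglyMeasurable z (volume.restrict I) :=
    hzm.mono_measure (Measure.restrict_mono hIJ le_rfl)
  have hz2I : IntegrableOn (fun ξ => ‖z ξ‖ ^ 2) I := hz2.mono_set hIJ
  have hzL2 : MemLp z 2 (volume.restrict I) :=
    (memLp_two_iff_integrable_sq_norm hzmI).mpr hz2I
  have hzI : IntegrableOn z I := hzL2.integrable one_le_two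
  set K : ℝ := ∫ t in I, ‖z t‖ with hKdef
  have hKnn : 0 ≤ K := integral_nonneg fun t => norm_nonneg _
  set Q : ℝ := ∫ t in I, ‖z t‖ ^ 2 with hQdef
  -- Cauchy-Schwarz: K ≤ √Q
  have hK : K ≤ Real.sqrt Q := by
    have h2 : (2:ℝ).HolderConjugate 2 := Real.HolderConjugate.two_two
    have hone : MemLp (fun _ : ℝ => (1:ℝ)) (ENNReal.ofReal 2) (volume.restrict I) := by
      simpa using memLp_const (μ := volume.restrict I) (1:ℝ)
    have hznorm : MemLp (fun t => ‖z t‖) (ENNReal.ofReal 2) (volume.restrict I) := by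
      simpa using hzL2.norm
    have hh := integral_mul_le_Lp_mul_Lq_of_nonneg h2
      (f := fun t => ‖z t‖) (g := fun _ => (1:ℝ)) (μ := volume.restrict I)
      (Filter.Eventually.of_forall fun t => norm_nonneg _)
      (Filter.Eventually.of_forall fun t => zero_le_one) hznorm hone
    have hI1 : (∫ (_ : ℝ) in I, (1:ℝ)) = 1 := by
      rw [MeasureTheory.setIntegral_const, measureReal_def, hvolI, ENNReal.toReal_one, one_smul]
    have heq2 : (∫ t in I, ‖z t‖ ^ (2:ℝ)) = Q := by
      rw [hQdef]
      refine integral_congr_ae (Filter.Eventually.of_forall fun t => ?_)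
      show ‖z t‖ ^ (2:ℝ) = ‖z t‖ ^ (2:ℕ)
      rw [← Real.rpow_natCast (‖z t‖) 2]; norm_num
    simp only [mul_one, Real.one_rpow] at hh
    rw [hI1, Real.one_rpow, mul_one, heq2] at hh
    calc K ≤ Q ^ ((1:ℝ)/2) := hh
      _ = Real.sqrt Q := (Real.sqrt_eq_rpow Q).symm
  -- integrability of B·y and ‖B‖‖y‖ on I
  obtain ⟨u₁, hu₁, hmax₁⟩ := hIcpt.exists_isMaxOn hIne hycI.norm
  have hymI : AEStronglyMeasurable y (volume.restrict I) :=
    hycI.aestronglyMeasurable measurableSet_Icc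
  have hBym : AEStronglyMeasurable (fun t => B t (y t)) (volume.restrict I) :=
    isBoundedBilinearMap_apply.continuous.comp_aestronglyMeasurable
      (hB.aestronglyMeasurable.restrict.prodMk hymI)
  have hbd : ∀ᵐ t ∂(volume.restrict I), ‖B t (y t)‖ ≤ ‖(fun s => ‖y u₁‖ * ‖B s‖) t‖ := by
    refine (ae_restrict_iff' measurableSet_Icc).mpr (Filter.Eventually.of_forall fun t ht => ?_)
    have h1 : ‖B t (y t)‖ ≤ ‖B t‖ * ‖y t‖ := (B t).le_opNorm _
    have h2 : ‖y t‖ ≤ ‖y u₁‖ := hmax₁ ht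
    have h3 : (0:ℝ) ≤ ‖y u₁‖ * ‖B t‖ := mul_nonneg (norm_nonneg _) (norm_nonneg _)
    rw [Real.norm_of_nonneg h3]
    calc ‖B t (y t)‖ ≤ ‖B t‖ * ‖y t‖ := h1
      _ ≤ ‖B t‖ * ‖y u₁‖ := by gcongr
      _ = ‖y u₁‖ * ‖B t‖ := mul_comm _ _
  have hByI : IntegrableOn (fun t => B t (y t)) I :=
    Integrable.mono ((hβ.const_mul ‖y u₁‖).integrableOn) hBym hbd
  have hβyI : IntegrableOn (fun t => ‖B t‖ * ‖y t‖) I := by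
    refine Integrable.mono ((hβ.const_mul ‖y u₁‖).integrableOn)
      (hβ.aestronglyMeasurable.restrict.mul hymI.norm) ?_
    refine (ae_restrict_iff' measurableSet_Icc).mpr (Filter.Eventually.of_forall fun t ht => ?_)
    have h2 : ‖y t‖ ≤ ‖y u₁‖ := hmax₁ ht
    have h3 : (0:ℝ) ≤ ‖y u₁‖ * ‖B t‖ := mul_nonneg (norm_nonneg _) (norm_nonneg _)
    rw [Real.norm_of_nonneg h3, Real.norm_of_nonneg (mul_nonneg (norm_nonneg _) (norm_nonneg _))]
    calc ‖B t‖ * ‖y t‖ ≤ ‖B t‖ * ‖y u₁‖ := by gcongr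
      _ = ‖y u₁‖ * ‖B t‖ := mul_comm _ _
  -- the basic integral inequality
  have hBI : ∀ s ∈ I, ∀ u ∈ I,
      ‖y u‖ ≤ ‖y s‖ + (∫ t in Set.uIcc s u, ‖B t‖ * ‖y t‖) + K := by
    intro s hs u hu
    have hsub : Set.uIcc s u ⊆ I := Set.uIcc_subset_Icc hs hu
    have hioc : Set.uIoc s u ⊆ I := Set.uIoc_subset_uIcc.trans hsub
    have hBint : IntervalIntegrable (fun t => B t (y t)) volume s u :=
      intervalIntegrable_iff.mpr (hByI.mono_set hioc)
    have hzint : IntervalIntegrable z volume s u :=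
      intervalIntegrable_iff.mpr (hzI.mono_set hioc)
    have hkey := heq u (hIJ hu) s (hIJ hs)
    have e1 : ‖∫ ξ in s..u, B ξ (y ξ)‖ ≤ ∫ t in Set.uIcc s u, ‖B t‖ * ‖y t‖ := by
      calc ‖∫ ξ in s..u, B ξ (y ξ)‖ ≤ ∫ t in Set.uIoc s u, ‖B t (y t)‖ :=
            intervalIntegral.norm_integral_le_integral_norm_uIoc
        _ ≤ ∫ t in Set.uIoc s u, ‖B t‖ * ‖y t‖ := by
            refine integral_mono ((hByI.mono_set hioc).norm) (hβyI.mono_set hioc) fun t => ?_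
            exact (B t).le_opNorm _
        _ ≤ ∫ t in Set.uIcc s u, ‖B t‖ * ‖y t‖ := by
            refine setIntegral_mono_set (hβyI.mono_set hsub)
              (Filter.Eventually.of_forall fun t =>
                mul_nonneg (norm_nonneg _) (norm_nonneg _)) ?_
            exact (Set.uIoc_subset_uIcc).eventuallyLE
    have e2 : ‖∫ ξ in s..u, z ξ‖ ≤ K := by
      calc ‖∫ ξ in s..u, z ξ‖ ≤ ∫ t in Set.uIoc s u, ‖z t‖ :=
            intervalIntegral.norm_integral_le_integral_norm_uIoc
        _ ≤ K := setIntegral_mono_set hzI.norm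
            (Filter.Eventually.of_forall fun t => norm_nonneg _) hioc.eventuallyLE
    calc ‖y u‖ = ‖y s + ∫ ξ in s..u, (B ξ (y ξ) - z ξ)‖ := by rw [← hkey]
      _ ≤ ‖y s‖ + ‖∫ ξ in s..u, (B ξ (y ξ) - z ξ)‖ := norm_add_le _ _
      _ = ‖y s‖ + ‖(∫ ξ in s..u, B ξ (y ξ)) - ∫ ξ in s..u, z ξ‖ := by
          rw [intervalIntegral.integral_sub hBint hzint]
      _ ≤ ‖y s‖ + (‖∫ ξ in s..u, B ξ (y ξ)‖ + ‖∫ ξ in s..u, z ξ‖) := by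
          gcongr; exact norm_sub_le _ _
      _ ≤ ‖y s‖ + (∫ t in Set.uIcc s u, ‖B t‖ * ‖y t‖) + K := by linarith
  -- base step of Grönwall
  have hbase : ∀ s ∈ I, ∀ t ∈ I, (∫ u in Set.uIcc s t, ‖B u‖) ≤ 1/2 →
      ∀ u ∈ Set.uIcc s t, ‖y u‖ ≤ 2 * ‖y s‖ + 2 * K := by
    intro s hs t ht hvar u hu
    have hsub : Set.uIcc s t ⊆ I := Set.uIcc_subset_Icc hs ht
    obtain ⟨v, hv, hmaxv⟩ := isCompact_uIcc.exists_isMaxOn Set.nonempty_uIcc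
      ((hycI.mono hsub).norm)
    have hineq := hBI s hs v (hsub hv)
    have h1 : (∫ τ in Set.uIcc s v, ‖B τ‖ * ‖y τ‖) ≤ ‖y v‖ * (1/2) := by
      calc (∫ τ in Set.uIcc s v, ‖B τ‖ * ‖y τ‖)
          ≤ ∫ τ in Set.uIcc s t, ‖B τ‖ * ‖y τ‖ := by
            refine setIntegral_mono_set (hβyI.mono_set hsub)
              (Filter.Eventually.of_forall fun τ =>
                mul_nonneg (norm_nonneg _) (norm_nonneg _)) ?_
            exact (Set.uIcc_subset_uIcc Set.left_mem_uIcc hv).eventuallyLE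
        _ ≤ ∫ τ in Set.uIcc s t, ‖B τ‖ * ‖y v‖ := by
            refine setIntegral_mono_on (hβyI.mono_set hsub)
              ((hβ.integrableOn).mul_const _) measurableSet_uIcc fun τ hτ => ?_
            exact mul_le_mul_of_nonneg_left (hmaxv hτ) (norm_nonneg _)
        _ = (∫ τ in Set.uIcc s t, ‖B τ‖) * ‖y v‖ := integral_mul_const _ _
        _ ≤ ‖y v‖ * (1/2) := by
            rw [mul_comm]; exact mul_le_mul_of_nonneg_left hvar (norm_nonneg _)
    have hySv : ‖y v‖ ≤ 2 * ‖y s‖ + 2 * K := by linarith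
    exact (hmaxv hu).trans hySv
  -- the primitive of ‖B‖
  set G : ℝ → ℝ := fun t => ∫ s in c..t, ‖B s‖ with hGdef
  have hGcont : Continuous G :=
    intervalIntegral.continuous_primitive (fun a b => hβ.intervalIntegrable) c
  have hGdiff : ∀ s t : ℝ, s ≤ t → G t - G s = ∫ u in Set.uIcc s t, ‖B u‖ := by
    intro s t hst
    rw [Set.uIcc_of_le hst, MeasureTheory.integral_Icc_eq_integral_Ioc,
      ← intervalIntegral.integral_of_le hst]
    exact intervalIntegral.integral_interval_sub_left
      (hβ.intervalIntegrable) (hβ.intervalIntegrable)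
  -- Grönwall induction
  have hind : ∀ n : ℕ, ∀ s ∈ I, ∀ t ∈ I,
      (∫ u in Set.uIcc s t, ‖B u‖) ≤ (n + 1) / 2 →
      ‖y t‖ + 2 * K ≤ 2 ^ (n + 1) * (‖y s‖ + 2 * K) := by
    intro n
    induction n with
    | zero =>
      intro s hs t ht hvar
      have h1 := hbase s hs t ht (by push_cast at hvar; linarith) t Set.right_mem_uIcc
      rw [pow_one]; linarith
    | succ n ih =>
      intro s hs t ht hvar
      have hpow : (2:ℝ) ≤ 2 ^ (n + 1 + 1) := by
        calc (2:ℝ) = 2 ^ 1 := (pow_one 2).symm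
          _ ≤ 2 ^ (n + 1 + 1) := pow_le_pow_right₀ one_le_two (by omega)
      by_cases hc : (∫ u in Set.uIcc s t, ‖B u‖) ≤ 1/2
      · have h1 := hbase s hs t ht hc t Set.right_mem_uIcc
        have h2 : (2:ℝ) * (‖y s‖ + 2 * K) ≤ 2 ^ (n + 1 + 1) * (‖y s‖ + 2 * K) :=
          mul_le_mul_of_nonneg_right hpow (by positivity)
        linarith
      · push_neg at hc
        have hsub : Set.uIcc s t ⊆ I := Set.uIcc_subset_Icc hs ht
        rcases le_total s t with hst | hts
        · have hVt := hGdiff s t hst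
          have hmem : G s + 1/2 ∈ Set.uIcc (G s) (G t) := by
            rw [Set.uIcc_of_le (by linarith : G s ≤ G t)]
            constructor <;> linarith
          obtain ⟨m, hm, hGm⟩ := intermediate_value_uIcc hGcont.continuousOn hmem
          have hm' : m ∈ Set.Icc s t := by rwa [Set.uIcc_of_le hst] at hm
          have hmI : m ∈ I := hsub (by rwa [Set.uIcc_of_le hst])
          have hv1 : (∫ u in Set.uIcc s m, ‖B u‖) ≤ 1/2 := by
            rw [← hGdiff s m hm'.1, hGm]; linarith
          have hv2 : (∫ u in Set.uIcc m t, ‖B u‖) ≤ (n + 1) / 2 := by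
            rw [← hGdiff m t hm'.2, hGm]
            push_cast at hvar ⊢
            linarith
          have hym := hbase s hs m hmI hv1 m Set.right_mem_uIcc
          have hih := ih m hmI t ht hv2
          have h3 : (2:ℝ) ^ (n + 1) * (‖y m‖ + 2 * K)
              ≤ 2 ^ (n + 1) * (2 * (‖y s‖ + 2 * K)) :=
            mul_le_mul_of_nonneg_left (by linarith) (by positivity)
          calc ‖y t‖ + 2 * K ≤ 2 ^ (n + 1) * (‖y m‖ + 2 * K) := hih
            _ ≤ 2 ^ (n + 1) * (2 * (‖y s‖ + 2 * K)) := h3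
            _ = 2 ^ (n + 1 + 1) * (‖y s‖ + 2 * K) := by ring
        · have hVt := hGdiff t s hts
          rw [Set.uIcc_comm] at hc
          have hmem : G s - 1/2 ∈ Set.uIcc (G s) (G t) := by
            rw [Set.uIcc_comm, Set.uIcc_of_le (by linarith : G t ≤ G s)]
            constructor <;> linarith
          obtain ⟨m, hm, hGm⟩ := intermediate_value_uIcc hGcont.continuousOn hmem
          have hm' : m ∈ Set.Icc t s := by rwa [Set.uIcc_comm, Set.uIcc_of_le hts] at hm
          have hmI : m ∈ I := hsub (by rwa [Set.uIcc_comm, Set.uIcc_of_le hts])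
          have hv1 : (∫ u in Set.uIcc s m, ‖B u‖) ≤ 1/2 := by
            rw [Set.uIcc_comm, ← hGdiff m s hm'.2, hGm]; linarith
          have hv2 : (∫ u in Set.uIcc m t, ‖B u‖) ≤ (n + 1) / 2 := by
            rw [Set.uIcc_comm, ← hGdiff t m hm'.1, hGm]
            push_cast at hvar ⊢
            rw [Set.uIcc_comm] at hvar
            linarith
          have hym := hbase s hs m hmI hv1 m Set.right_mem_uIcc
          have hih := ih m hmI t ht hv2
          have h3 : (2:ℝ) ^ (n + 1) * (‖y m‖ + 2 * K)
              ≤ 2 ^ (n + 1) * (2 * (‖y s‖ + 2 * K)) :=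
            mul_le_mul_of_nonneg_left (by linarith) (by positivity)
          calc ‖y t‖ + 2 * K ≤ 2 ^ (n + 1) * (‖y m‖ + 2 * K) := hih
            _ ≤ 2 ^ (n + 1) * (2 * (‖y s‖ + 2 * K)) := h3
            _ = 2 ^ (n + 1 + 1) * (‖y s‖ + 2 * K) := by ring
  -- anchor point
  obtain ⟨x₀, hx₀, hmin⟩ := hIcpt.exists_isMinOn hIne hycI.norm
  set T : ℝ := (∫ ξ in J, ‖y ξ‖ ^ 2) + ∫ ξ in J, ‖z ξ‖ ^ 2 with hTdef
  have hTy : 0 ≤ ∫ ξ in J, ‖y ξ‖ ^ 2 := integral_nonneg fun t => by positivity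
  have hTz : 0 ≤ ∫ ξ in J, ‖z ξ‖ ^ 2 := integral_nonneg fun t => by positivity
  have hQJ : Q ≤ ∫ ξ in J, ‖z ξ‖ ^ 2 :=
    setIntegral_mono_set hz2 (Filter.Eventually.of_forall fun t => by positivity)
      hIJ.eventuallyLE
  have hyIJ : (∫ ξ in I, ‖y ξ‖ ^ 2) ≤ ∫ ξ in J, ‖y ξ‖ ^ 2 :=
    setIntegral_mono_set hy2 (Filter.Eventually.of_forall fun t => by positivity)
      hIJ.eventuallyLE
  have hKT : K ≤ Real.sqrt T :=
    hK.trans (Real.sqrt_le_sqrt (by simp only [hTdef]; linarith))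
  have hL2 : ‖y x₀‖ ^ 2 ≤ ∫ ξ in I, ‖y ξ‖ ^ 2 := by
    have h1 : (∫ _ in I, ‖y x₀‖ ^ 2) ≤ ∫ ξ in I, ‖y ξ‖ ^ 2 := by
      refine setIntegral_mono_on ((integrableOn_const_iff (C := ‖y x₀‖ ^ 2)).mpr (Or.inr ?_))
        (hy2.mono_set hIJ) measurableSet_Icc fun t ht => ?_
      · rw [hvolI]; exact ENNReal.one_lt_top
      · exact pow_le_pow_left₀ (norm_nonneg _) (hmin ht) 2
    rw [setIntegral_const, measureReal_def, hvolI] at h1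
    simpa using h1
  have hLT : ‖y x₀‖ ≤ Real.sqrt T := by
    rw [show ‖y x₀‖ = Real.sqrt (‖y x₀‖ ^ 2) by rw [Real.sqrt_sq (norm_nonneg _)]]
    exact Real.sqrt_le_sqrt (by simp only [hTdef]; linarith)
  -- conclude
  set N : ℕ := ⌈2 * ∫ t, ‖B t‖⌉₊ with hNdef
  have hvarM : (∫ u in Set.uIcc x₀ x, ‖B u‖) ≤ (N + 1) / 2 := by
    have h1 : (∫ u in Set.uIcc x₀ x, ‖B u‖) ≤ ∫ u, ‖B u‖ :=
      setIntegral_le_integral hβ (Filter.Eventually.of_forall hβnn)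
    have h2 : 2 * (∫ u, ‖B u‖) ≤ N := Nat.le_ceil _
    linarith
  have hfinal := hind N x₀ hx₀ x hx hvarM
  have hsq : 0 ≤ Real.sqrt T := Real.sqrt_nonneg _
  have h4 : (2:ℝ) ^ (N + 1) * (‖y x₀‖ + 2 * K) ≤ 2 ^ (N + 1) * (3 * Real.sqrt T) :=
    mul_le_mul_of_nonneg_left (by linarith) (by positivity)
  calc ‖y x‖ ≤ ‖y x‖ + 2 * K := by linarith
    _ ≤ 2 ^ (N + 1) * (‖y x₀‖ + 2 * K) := hfinal
    _ ≤ 2 ^ (N + 1) * (3 * Real.sqrt T) := h4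
    _ = 3 * 2 ^ (N + 1) * Real.sqrt T := by ring

/-- uniform embedding `H_J ↪ L^∞(J)`: there is `C > 0`, depending only on
the integrable coefficient `B`, such that for every compact interval `J = [a,b]` with
`b − a ≥ 1` and also for `J = ℝ`, every `H_J`-pair `(y,z)` with `∫_J ‖y‖² < ∞` satisfies
`sup_{x∈J} ‖y(x)‖ ≤ C (∫_J ‖y‖² + ∫_J ‖z‖²)^{1/2}`. -/
theorem stmt18 (d : ℕ)
    (B : ℝ → (EuclideanSpace ℂ (Fin d) →L[ℂ] EuclideanSpace ℂ (Fin d)))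
    (hB : Integrable B) :
    ∃ C > 0,
      (∀ a b : ℝ, a + 1 ≤ b →
        ∀ y z : ℝ → EuclideanSpace ℂ (Fin d),
          IsHJPair d B (Set.Icc a b) y z →
          IntegrableOn (fun ξ => ‖y ξ‖ ^ 2) (Set.Icc a b) →
          ∀ x ∈ Set.Icc a b,
            ‖y x‖ ≤ C * Real.sqrt
              ((∫ ξ in Set.Icc a b, ‖y ξ‖ ^ 2) + ∫ ξ in Set.Icc a b, ‖z ξ‖ ^ 2)) ∧
      (∀ y z : ℝ → EuclideanSpace ℂ (Fin d),
        IsHJPair d B Set.univ y z →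
        Integrable (fun ξ => ‖y ξ‖ ^ 2) →
        ∀ x : ℝ,
          ‖y x‖ ≤ C * Real.sqrt ((∫ ξ, ‖y ξ‖ ^ 2) + ∫ ξ, ‖z ξ‖ ^ 2)) := by
  refine ⟨3 * 2 ^ (⌈2 * ∫ t, ‖B t‖⌉₊ + 1), by positivity, ?_, ?_⟩
  · intro a b hab y z hpair hy2 x hx
    set c : ℝ := max a (x - 1) with hcdef
    have hIJ : Set.Icc c (c + 1) ⊆ Set.Icc a b := by
      apply Set.Icc_subset_Icc (le_max_left _ _)
      have h1 : a ≤ b - 1 := by linarith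
      have h2 : x - 1 ≤ b - 1 := by linarith [hx.2]
      have := max_le h1 h2
      linarith [this]
    have hx' : x ∈ Set.Icc c (c + 1) := by
      constructor
      · exact max_le hx.1 (by linarith)
      · linarith [le_max_right a (x - 1)]
    exact hj_key hB hpair hy2 hIJ hx'
  · intro y z hpair hy2 x
    have h := hj_key hB (J := Set.univ) hpair hy2.integrableOn (Set.subset_univ _)
      (c := x - 1) ⟨by linarith, by linarith⟩
    simp only [Measure.restrict_univ] at h
    exact h
end

section
/- Let B : ℝ → ℂ^{d×d} be measurable with ∫_ℝ ‖B(ξ)‖ dξ < ∞. Then there exists a constant c > 0, depending only on B, such that for every compact interval J = [a, b] with b − a ≥ 1, every H_J-pair (y, z) with ∫_J ‖y‖² < ∞, every measurable A : J → ℂ^{d×d} with M := ess sup_{x∈J} ‖A(x) − B(x)‖ < ∞, and all matrices R₋, R₊ ∈ ℂ^{d×d}: ∫_J ‖z(x) + (A(x) − B(x))y(x)‖² dx + ‖R₋ y(a) + R₊ y(b)‖² ≤ c · (1 + M² + ‖R₋‖² + ‖R₊‖²) · (∫_J ‖y‖² + ∫_J ‖z‖²). (Since −y' + Ay = z + (A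 − B)y, this is the uniform boundedness in J of the finite-interval boundary value operators F_N(λ)y = (−y' + A(λ,·)y, R₋(λ)y(a) + R₊(λ)y(b)) on the spaces H_J.) -/
open MeasureTheory intervalIntegral

/-- Cauchy–Schwarz on a set of measure at most one. -/
private lemma cs_aux {s : Set ℝ} (hs : volume s ≤ 1) {h : ℝ → ℝ}
    (h0 : ∀ x, 0 ≤ h x) (h2 : IntegrableOn (fun x => h x ^ 2) s)
    (h1 : IntegrableOn h s) :
    (∫ x in s, h x) ≤ Real.sqrt (∫ x in s, h x ^ 2) := by
  set V := ∫ x in s, h x ^ 2 with hVdef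
  have hV0 : 0 ≤ V := integral_nonneg fun x => sq_nonneg _
  have hμ : (volume s).toReal ≤ 1 := by
    have := ENNReal.toReal_mono (by norm_num) hs
    simpa using this
  have hμfin : volume s < ⊤ := lt_of_le_of_lt hs (by norm_num)
  have key : ∀ t : ℝ, 0 < t → (∫ x in s, h x) ≤ V / (2*t) + t/2 := by
    intro t ht
    have hc : IntegrableOn (fun _ : ℝ => t/2) s := integrableOn_const hμfin.ne
    have hdiv : IntegrableOn (fun x => h x ^ 2 / (2*t)) s := h2.div_const _
    have hle : (∫ x in s, h x) ≤ ∫ x in s, (h x ^ 2 / (2*t) + t/2) := by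
      refine integral_mono h1 (hdiv.add hc) fun x => ?_
      have := sq_nonneg (h x - t)
      rw [div_add' _ _ _ (by positivity)]
      rw [le_div_iff₀ (by positivity)]
      nlinarith [h0 x]
    have e1 : ∫ x in s, (h x ^ 2 / (2*t) + t/2) =
        (∫ x in s, h x ^ 2 / (2*t)) + ∫ x in s, (t/2 : ℝ) := integral_add hdiv hc
    have e2 : ∫ x in s, h x ^ 2 / (2*t) = V / (2*t) := integral_div _ _
    have e3 : ∫ x in s, (t/2 : ℝ) = (volume s).toReal * (t/2) := by
      rw [setIntegral_const]; simp [smul_eq_mul, measureReal_def]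
    have : (volume s).toReal * (t/2) ≤ t/2 := by nlinarith
    calc (∫ x in s, h x) ≤ (∫ x in s, h x ^ 2 / (2*t)) + ∫ x in s, (t/2 : ℝ) := by
          rw [← e1]; exact hle
      _ ≤ V / (2*t) + t/2 := by rw [e2, e3]; linarith
  rcases eq_or_lt_of_le hV0 with hV | hV
  · by_contra hcon
    push_neg at hcon
    have h00 : Real.sqrt V = 0 := by rw [← hV, Real.sqrt_zero]
    rw [h00] at hcon
    have := key (∫ x in s, h x) hcon
    rw [← hV] at this
    simp at this
    linarith
  · have hsq := Real.sqrt_pos.2 hV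
    have hmul : Real.sqrt V * Real.sqrt V = V := Real.mul_self_sqrt hV0
    have := key (Real.sqrt V) hsq
    have : V / (2 * Real.sqrt V) = Real.sqrt V / 2 := by
      rw [eq_div_iff (by norm_num)]
      field_simp
      nlinarith
    linarith [key (Real.sqrt V) hsq]

/-- Choice of a truncation level `R` for `‖B‖` with small residual mass. -/
private lemma exists_R {d : ℕ}
    {B : ℝ → (EuclideanSpace ℂ (Fin d) →L[ℂ] EuclideanSpace ℂ (Fin d))}
    (hB : Integrable B) :
    ∃ R : ℝ, 0 ≤ R ∧ (∫ ξ, (‖B ξ‖ - min ‖B ξ‖ R)) ≤ 1/4 := by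
  have hg : Integrable (fun ξ => ‖B ξ‖) := hB.norm
  have hmeas : ∀ n : ℕ, AEStronglyMeasurable (fun ξ => min ‖B ξ‖ (n : ℝ)) volume := by
    intro n
    exact (hg.aemeasurable.min aemeasurable_const).aestronglyMeasurable
  have hbound : ∀ n : ℕ, ∀ᵐ ξ, ‖min ‖B ξ‖ (n : ℝ)‖ ≤ ‖B ξ‖ := by
    intro n
    filter_upwards with ξ
    rw [Real.norm_eq_abs, abs_of_nonneg (le_min (norm_nonneg _) (Nat.cast_nonneg n))]
    exact min_le_left _ _
  have hptw : ∀ᵐ ξ, Filter.Tendsto (fun n : ℕ => min ‖B ξ‖ (n : ℝ)) Filter.atTop (nhds ‖B ξ‖) := by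
    filter_upwards with ξ
    have hev : ∀ᶠ n : ℕ in Filter.atTop, (fun _ : ℕ => ‖B ξ‖) n = min ‖B ξ‖ (n : ℝ) := by
      filter_upwards [Filter.eventually_ge_atTop ⌈‖B ξ‖⌉₊] with n hn
      exact (min_eq_left (le_trans (Nat.le_ceil _) (by exact_mod_cast hn))).symm
    exact tendsto_const_nhds.congr' hev
  have htend := tendsto_integral_of_dominated_convergence _ hmeas hg hbound hptw
  have h2 : Filter.Tendsto
      (fun n : ℕ => (∫ ξ, ‖B ξ‖) - ∫ ξ, min ‖B ξ‖ (n : ℝ)) Filter.atTop (nhds 0) := by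
    have h := (tendsto_const_nhds (x := (∫ ξ, ‖B ξ‖))).sub htend
    rw [sub_self] at h
    exact h
  have hev : ∀ᶠ n : ℕ in Filter.atTop,
      (∫ ξ, ‖B ξ‖) - (∫ ξ, min ‖B ξ‖ (n : ℝ)) < 1/4 :=
    h2.eventually (gt_mem_nhds (by norm_num))
  obtain ⟨n, hn⟩ := hev.exists
  refine ⟨n, Nat.cast_nonneg n, ?_⟩
  have hmin : Integrable (fun ξ => min ‖B ξ‖ (n : ℝ)) := hg.mono' (hmeas n) (hbound n)
  rw [integral_sub hg hmin]
  linarith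

set_option maxHeartbeats 1000000 in
/-- Key endpoint bound on a unit interval. -/
private lemma key_bound {d : ℕ}
    {B : ℝ → (EuclideanSpace ℂ (Fin d) →L[ℂ] EuclideanSpace ℂ (Fin d))}
    (hB : Integrable B) {R : ℝ} (hR0 : 0 ≤ R)
    (hRs : (∫ ξ, (‖B ξ‖ - min ‖B ξ‖ R)) ≤ 1/4)
    (α : ℝ) {y z : ℝ → EuclideanSpace ℂ (Fin d)}
    (hy : ContinuousOn y (Set.Icc α (α+1)))
    (hz : IntegrableOn z (Set.Icc α (α+1)))
    (hz2 : IntegrableOn (fun ξ => ‖z ξ‖ ^ 2) (Set.Icc α (α+1)))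
    (heq : ∀ x ∈ Set.Icc α (α+1), ∀ x₀ ∈ Set.Icc α (α+1),
      y x = y x₀ + ∫ ξ in x₀..x, (B ξ (y ξ) - z ξ)) :
    ∀ x ∈ Set.Icc α (α+1), ‖y x‖ ^ 2 ≤
      4 * (1+R)^2 * ((∫ ξ in Set.Icc α (α+1), ‖y ξ‖ ^ 2) +
        ∫ ξ in Set.Icc α (α+1), ‖z ξ‖ ^ 2) := by
  set I := Set.Icc α (α+1) with hIdef
  have hIc : IsCompact I := isCompact_Icc
  have hIne : I.Nonempty := Set.nonempty_Icc.2 (by linarith)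
  have hμI : volume I = 1 := by rw [hIdef, Real.volume_Icc]; norm_num
  obtain ⟨xm, hxm, hmax⟩ := hIc.exists_isMaxOn hIne (continuous_norm.comp_continuousOn hy)
  set S := ‖y xm‖ with hSdef
  have hS0 : 0 ≤ S := norm_nonneg _
  have hSle : ∀ x ∈ I, ‖y x‖ ≤ S := fun x hx => hmax hx
  -- measurability / integrability on I
  have hymeas : AEStronglyMeasurable y (volume.restrict I) :=
    hy.aestronglyMeasurable measurableSet_Icc
  have hyInt : IntegrableOn y I := hy.integrableOn_compact hIc
  have hnyInt : IntegrableOn (fun ξ => ‖y ξ‖) I := hyInt.norm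
  have hy2Int : IntegrableOn (fun ξ => ‖y ξ‖ ^ 2) I :=
    ((continuous_norm.comp_continuousOn hy).pow 2).integrableOn_compact hIc
  have hgmeas : AEStronglyMeasurable (fun ξ => ‖B ξ‖) (volume.restrict I) :=
    hB.norm.aestronglyMeasurable.restrict
  have hgInt : IntegrableOn (fun ξ => ‖B ξ‖) I := hB.norm.integrableOn
  have hgyInt : IntegrableOn (fun ξ => ‖B ξ‖ * ‖y ξ‖) I := by
    refine Integrable.mono' (hgInt.mul_const S) (hgmeas.mul hymeas.norm) ?_
    filter_upwards [ae_restrict_mem measurableSet_Icc] with ξ hξ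
    rw [Real.norm_eq_abs, abs_of_nonneg (mul_nonneg (norm_nonneg _) (norm_nonneg _))]
    exact mul_le_mul_of_nonneg_left (hSle ξ hξ) (norm_nonneg _)
  have hByMeas : AEStronglyMeasurable (fun ξ => B ξ (y ξ)) (volume.restrict I) :=
    isBoundedBilinearMap_apply.continuous.comp_aestronglyMeasurable
      (hB.aestronglyMeasurable.restrict.prodMk hymeas)
  have hByInt : IntegrableOn (fun ξ => B ξ (y ξ)) I := by
    refine Integrable.mono' (hgInt.mul_const S) hByMeas ?_
    filter_upwards [ae_restrict_mem measurableSet_Icc] with ξ hξ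
    calc ‖B ξ (y ξ)‖ ≤ ‖B ξ‖ * ‖y ξ‖ := (B ξ).le_opNorm _
      _ ≤ ‖B ξ‖ * S := mul_le_mul_of_nonneg_left (hSle ξ hξ) (norm_nonneg _)
  have hfInt : IntegrableOn (fun ξ => B ξ (y ξ) - z ξ) I := hByInt.sub hz
  have hminmeas : AEStronglyMeasurable (fun ξ => min ‖B ξ‖ R) (volume.restrict I) :=
    (hgmeas.aemeasurable.min aemeasurable_const).aestronglyMeasurable
  have hminInt : IntegrableOn (fun ξ => min ‖B ξ‖ R * ‖y ξ‖) I := by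
    refine Integrable.mono' (hnyInt.const_mul R) (hminmeas.mul hymeas.norm) ?_
    filter_upwards with ξ
    rw [Real.norm_eq_abs,
      abs_of_nonneg (mul_nonneg (le_min (norm_nonneg _) hR0) (norm_nonneg _))]
    exact mul_le_mul_of_nonneg_right (min_le_right _ _) (norm_nonneg _)
  have hdiffInt : IntegrableOn (fun ξ => (‖B ξ‖ - min ‖B ξ‖ R) * ‖y ξ‖) I := by
    have heq' : (fun ξ => (‖B ξ‖ - min ‖B ξ‖ R) * ‖y ξ‖) =
        fun ξ => ‖B ξ‖ * ‖y ξ‖ - min ‖B ξ‖ R * ‖y ξ‖ := by funext ξ; ring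
    rw [heq']; exact hgyInt.sub hminInt
  have hminGlob : Integrable (fun ξ => min ‖B ξ‖ R) := by
    refine hB.norm.mono'
      ((hB.norm.aestronglyMeasurable.aemeasurable.min aemeasurable_const).aestronglyMeasurable) ?_
    filter_upwards with ξ
    rw [Real.norm_eq_abs, abs_of_nonneg (le_min (norm_nonneg _) hR0)]
    exact min_le_left _ _
  have hgsubInt : Integrable (fun ξ => ‖B ξ‖ - min ‖B ξ‖ R) := hB.norm.sub hminGlob
  set Ny := ∫ ξ in I, ‖y ξ‖ with hNydef
  set Nz := ∫ ξ in I, ‖z ξ‖ with hNzdef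
  -- bound on ∫_I ‖f‖
  have hIf : (∫ ξ in I, ‖B ξ (y ξ) - z ξ‖) ≤ R * Ny + S * (1/4) + Nz := by
    have hstep1 : (∫ ξ in I, ‖B ξ (y ξ) - z ξ‖) ≤
        ∫ ξ in I, (min ‖B ξ‖ R * ‖y ξ‖ + (‖B ξ‖ - min ‖B ξ‖ R) * ‖y ξ‖ + ‖z ξ‖) := by
      refine integral_mono hfInt.norm ((hminInt.add hdiffInt).add hz.norm) fun ξ => ?_
      have h1 : ‖B ξ (y ξ) - z ξ‖ ≤ ‖B ξ‖ * ‖y ξ‖ + ‖z ξ‖ :=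
        (norm_sub_le _ _).trans (add_le_add ((B ξ).le_opNorm _) le_rfl)
      have h2 : min ‖B ξ‖ R * ‖y ξ‖ + (‖B ξ‖ - min ‖B ξ‖ R) * ‖y ξ‖ = ‖B ξ‖ * ‖y ξ‖ := by ring
      rw [h2]; exact h1
    have h12 : IntegrableOn
        (fun ξ => min ‖B ξ‖ R * ‖y ξ‖ + (‖B ξ‖ - min ‖B ξ‖ R) * ‖y ξ‖) I :=
      hminInt.add hdiffInt
    have hstep2 : (∫ ξ in I, (min ‖B ξ‖ R * ‖y ξ‖ + (‖B ξ‖ - min ‖B ξ‖ R) * ‖y ξ‖ + ‖z ξ‖)) =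
        (∫ ξ in I, min ‖B ξ‖ R * ‖y ξ‖) + (∫ ξ in I, (‖B ξ‖ - min ‖B ξ‖ R) * ‖y ξ‖) + Nz := by
      rw [integral_add h12 hz.norm, integral_add hminInt hdiffInt]
    have hb1 : (∫ ξ in I, min ‖B ξ‖ R * ‖y ξ‖) ≤ R * Ny := by
      have : (∫ ξ in I, min ‖B ξ‖ R * ‖y ξ‖) ≤ ∫ ξ in I, R * ‖y ξ‖ := by
        refine integral_mono hminInt (hnyInt.const_mul R) fun ξ => ?_
        exact mul_le_mul_of_nonneg_right (min_le_right _ _) (norm_nonneg _)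
      rwa [MeasureTheory.integral_const_mul] at this
    have hb2 : (∫ ξ in I, (‖B ξ‖ - min ‖B ξ‖ R) * ‖y ξ‖) ≤ S * (1/4) := by
      have h1 : (∫ ξ in I, (‖B ξ‖ - min ‖B ξ‖ R) * ‖y ξ‖) ≤
          ∫ ξ in I, (‖B ξ‖ - min ‖B ξ‖ R) * S := by
        refine integral_mono_of_nonneg ?_ ((hgsubInt.integrableOn).mul_const S) ?_
        · filter_upwards with ξ
          exact mul_nonneg (sub_nonneg.2 (min_le_left _ _)) (norm_nonneg _)
        · filter_upwards [ae_restrict_mem measurableSet_Icc] with ξ hξ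
          exact mul_le_mul_of_nonneg_left (hSle ξ hξ)
            (sub_nonneg.2 (min_le_left _ _))
      have h2 : (∫ ξ in I, (‖B ξ‖ - min ‖B ξ‖ R) * S) =
          (∫ ξ in I, (‖B ξ‖ - min ‖B ξ‖ R)) * S := integral_mul_const _ _
      have h3 : (∫ ξ in I, (‖B ξ‖ - min ‖B ξ‖ R)) ≤ 1/4 := by
        refine le_trans (setIntegral_le_integral hgsubInt ?_) hRs
        filter_upwards with ξ
        exact sub_nonneg.2 (min_le_left _ _)
      have h4 : (∫ ξ in I, (‖B ξ‖ - min ‖B ξ‖ R)) * S ≤ (1/4) * S :=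
        mul_le_mul_of_nonneg_right h3 hS0
      rw [h2] at h1
      linarith
    linarith [hstep1, hstep2 ▸ hstep1]
  -- pointwise step
  have hstep : ∀ x ∈ I, ∀ x₀ ∈ I, ‖y x‖ ≤ ‖y x₀‖ + (R * Ny + S * (1/4) + Nz) := by
    intro x hx x₀ hx₀
    rw [heq x hx x₀ hx₀]
    refine (norm_add_le _ _).trans (add_le_add le_rfl ?_)
    have hb : ‖∫ ξ in x₀..x, (B ξ (y ξ) - z ξ)‖ ≤ ∫ ξ in Set.uIoc x₀ x, ‖B ξ (y ξ) - z ξ‖ :=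
      intervalIntegral.norm_integral_le_integral_norm_uIoc
    have hsub : Set.uIoc x₀ x ⊆ I :=
      Set.uIoc_subset_uIcc.trans (Set.uIcc_subset_Icc hx₀ hx)
    have hmono : (∫ ξ in Set.uIoc x₀ x, ‖B ξ (y ξ) - z ξ‖) ≤
        ∫ ξ in I, ‖B ξ (y ξ) - z ξ‖ := by
      refine setIntegral_mono_set hfInt.norm ?_ hsub.eventuallyLE
      filter_upwards with ξ; exact norm_nonneg _
    exact hb.trans (hmono.trans hIf)
  -- integrate over x₀
  have hSbound : S ≤ Ny + (R * Ny + S * (1/4) + Nz) := by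
    have hconst : IntegrableOn (fun _ : ℝ => S) I :=
      integrableOn_const (by rw [hμI]; norm_num)
    have hconst2 : IntegrableOn (fun _ : ℝ => R * Ny + S * (1/4) + Nz) I :=
      integrableOn_const (by rw [hμI]; norm_num)
    have h1 : S = ∫ _ in I, S := by
      rw [setIntegral_const, measureReal_def, hμI]; simp
    have h2 : (∫ _ in I, S) ≤ ∫ x₀ in I, (‖y x₀‖ + (R * Ny + S * (1/4) + Nz)) := by
      refine setIntegral_mono_on hconst (hnyInt.add hconst2) measurableSet_Icc fun x₀ hx₀ => ?_
      exact hstep xm hxm x₀ hx₀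
    have h3 : (∫ x₀ in I, (‖y x₀‖ + (R * Ny + S * (1/4) + Nz))) =
        Ny + (R * Ny + S * (1/4) + Nz) := by
      rw [integral_add hnyInt hconst2, setIntegral_const, measureReal_def, hμI]; simp [hNydef]
    rw [h3] at h2; linarith [h1 ▸ h2]
  have hS43 : S ≤ (4/3) * ((1+R) * Ny + Nz) := by linarith
  -- Cauchy–Schwarz
  set Qy := ∫ ξ in I, ‖y ξ‖ ^ 2 with hQydef
  set Qz := ∫ ξ in I, ‖z ξ‖ ^ 2 with hQzdef
  have hQy0 : 0 ≤ Qy := integral_nonneg fun ξ => sq_nonneg _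
  have hQz0 : 0 ≤ Qz := integral_nonneg fun ξ => sq_nonneg _
  have hNy : Ny ≤ Real.sqrt Qy :=
    cs_aux (le_of_eq hμI) (fun x => norm_nonneg _) hy2Int hnyInt
  have hNz : Nz ≤ Real.sqrt Qz :=
    cs_aux (le_of_eq hμI) (fun x => norm_nonneg _) hz2 hz.norm
  have hNy0 : 0 ≤ Ny := integral_nonneg fun ξ => norm_nonneg _
  have hNz0 : 0 ≤ Nz := integral_nonneg fun ξ => norm_nonneg _
  intro x hx
  have hxS : ‖y x‖ ≤ (4/3) * ((1+R) * Real.sqrt Qy + Real.sqrt Qz) := by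
    refine (hSle x hx).trans (hS43.trans ?_)
    have := mul_le_mul_of_nonneg_left hNy (by linarith : (0:ℝ) ≤ 1+R)
    linarith
  have hx2 : ‖y x‖ ^ 2 ≤ ((4/3) * ((1+R) * Real.sqrt Qy + Real.sqrt Qz)) ^ 2 :=
    pow_le_pow_left₀ (norm_nonneg _) hxS 2
  have hsq1 : Real.sqrt Qy * Real.sqrt Qy = Qy := Real.mul_self_sqrt hQy0
  have hsq2 : Real.sqrt Qz * Real.sqrt Qz = Qz := Real.mul_self_sqrt hQz0
  nlinarith [hx2, hsq1, hsq2, Real.sqrt_nonneg Qy, Real.sqrt_nonneg Qz,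
    sq_nonneg ((1+R) * Real.sqrt Qy - Real.sqrt Qz), hR0, sq_nonneg R,
    mul_nonneg hQy0 (mul_nonneg hR0 hR0), mul_nonneg hQz0 (mul_nonneg hR0 hR0),
    mul_nonneg hQz0 hR0, mul_nonneg hQy0 hR0]

set_option maxHeartbeats 2000000 in
set_option synthInstance.maxHeartbeats 200000 in
/-- uniform boundedness of the finite-interval boundary value operators.
There is `c > 0`, depending only on the integrable coefficient `B`, such that for every
compact interval `J = [a,b]` with `b − a ≥ 1`, every `H_J`-pair `(y,z)` with
`∫_J ‖y‖² < ∞`, every measurable `A : J → ℂ^{d×d}` with `‖A − B‖ ≤ M₀` a.e. on `J`, and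
all matrices `R₋, R₊`:
`∫_J ‖z + (A−B)y‖² + ‖R₋ y(a) + R₊ y(b)‖² ≤ c (1 + M₀² + ‖R₋‖² + ‖R₊‖²)(∫_J ‖y‖² + ∫_J ‖z‖²)`. -/
theorem stmt19 (d : ℕ)
    (B : ℝ → (EuclideanSpace ℂ (Fin d) →L[ℂ] EuclideanSpace ℂ (Fin d)))
    (hB : Integrable B) :
    ∃ c > 0,
      ∀ a b : ℝ, a + 1 ≤ b →
      ∀ y z : ℝ → EuclideanSpace ℂ (Fin d),
        IsHJPair d B (Set.Icc a b) y z →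
        IntegrableOn (fun ξ => ‖y ξ‖ ^ 2) (Set.Icc a b) →
        ∀ A : ℝ → (EuclideanSpace ℂ (Fin d) →L[ℂ] EuclideanSpace ℂ (Fin d)),
          AEStronglyMeasurable A (volume.restrict (Set.Icc a b)) →
          ∀ M₀ : ℝ,
            (∀ᵐ x ∂(volume.restrict (Set.Icc a b)), ‖A x - B x‖ ≤ M₀) →
            ∀ Rm Rp : EuclideanSpace ℂ (Fin d) →L[ℂ] EuclideanSpace ℂ (Fin d),
              (∫ x in Set.Icc a b, ‖z x + (A x - B x) (y x)‖ ^ 2) +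
                  ‖Rm (y a) + Rp (y b)‖ ^ 2
                ≤ c * (1 + M₀ ^ 2 + ‖Rm‖ ^ 2 + ‖Rp‖ ^ 2) *
                  ((∫ ξ in Set.Icc a b, ‖y ξ‖ ^ 2) + ∫ ξ in Set.Icc a b, ‖z ξ‖ ^ 2) := by
  obtain ⟨R, hR0, hRs⟩ := exists_R hB
  refine ⟨8 * (1+R)^2, by positivity, ?_⟩
  intro a b hab y z hpair hy2 A hA M₀ hM Rm Rp
  obtain ⟨hycont, hzmeas, hz2, heq⟩ := hpair
  have hab' : a ≤ b := by linarith
  set J := Set.Icc a b with hJdef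
  have hμJ : volume J < ⊤ := by rw [hJdef, Real.volume_Icc]; exact ENNReal.ofReal_lt_top
  -- z is integrable on J
  have hzJ : IntegrableOn z J := by
    have hsum : IntegrableOn (fun ξ => ‖z ξ‖ ^ 2 + 1) J :=
      hz2.add (integrableOn_const hμJ.ne)
    have hbnd : IntegrableOn (fun ξ => (‖z ξ‖ ^ 2 + 1) / 2) J := hsum.div_const 2
    refine Integrable.mono' hbnd hzmeas ?_
    filter_upwards with ξ
    have := sq_nonneg (‖z ξ‖ - 1)
    nlinarith [norm_nonneg (z ξ)]
  set Qy := ∫ ξ in J, ‖y ξ‖ ^ 2 with hQydef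
  set Qz := ∫ ξ in J, ‖z ξ‖ ^ 2 with hQzdef
  have hQy0 : 0 ≤ Qy := integral_nonneg fun ξ => sq_nonneg _
  have hQz0 : 0 ≤ Qz := integral_nonneg fun ξ => sq_nonneg _
  have hsub_a : Set.Icc a (a+1) ⊆ J := Set.Icc_subset_Icc le_rfl hab
  have hb1 : b - 1 + 1 = b := by ring
  have hsub_b : Set.Icc (b-1) (b-1+1) ⊆ J := by
    rw [hb1]; exact Set.Icc_subset_Icc (by linarith) le_rfl
  have hmono_y_a : (∫ ξ in Set.Icc a (a+1), ‖y ξ‖ ^ 2) ≤ Qy := by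
    refine setIntegral_mono_set hy2 ?_ hsub_a.eventuallyLE
    filter_upwards with ξ; exact sq_nonneg _
  have hmono_z_a : (∫ ξ in Set.Icc a (a+1), ‖z ξ‖ ^ 2) ≤ Qz := by
    refine setIntegral_mono_set hz2 ?_ hsub_a.eventuallyLE
    filter_upwards with ξ; exact sq_nonneg _
  have hmono_y_b : (∫ ξ in Set.Icc (b-1) (b-1+1), ‖y ξ‖ ^ 2) ≤ Qy := by
    refine setIntegral_mono_set hy2 ?_ hsub_b.eventuallyLE
    filter_upwards with ξ; exact sq_nonneg _
  have hmono_z_b : (∫ ξ in Set.Icc (b-1) (b-1+1), ‖z ξ‖ ^ 2) ≤ Qz := by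
    refine setIntegral_mono_set hz2 ?_ hsub_b.eventuallyLE
    filter_upwards with ξ; exact sq_nonneg _
  have hya : ‖y a‖ ^ 2 ≤ 4 * (1+R)^2 * (Qy + Qz) := by
    have h := key_bound hB hR0 hRs a (hycont.mono hsub_a) (hzJ.mono_set hsub_a)
      (hz2.mono_set hsub_a)
      (fun x hx x₀ hx₀ => heq x (hsub_a hx) x₀ (hsub_a hx₀)) a
      ⟨le_refl a, by linarith⟩
    have hpos : (0:ℝ) ≤ 4 * (1+R)^2 := by positivity
    nlinarith [hmono_y_a, hmono_z_a]
  have hyb : ‖y b‖ ^ 2 ≤ 4 * (1+R)^2 * (Qy + Qz) := by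
    have h := key_bound hB hR0 hRs (b-1) (hycont.mono hsub_b) (hzJ.mono_set hsub_b)
      (hz2.mono_set hsub_b)
      (fun x hx x₀ hx₀ => heq x (hsub_b hx) x₀ (hsub_b hx₀)) b
      ⟨by linarith, by linarith⟩
    have hpos : (0:ℝ) ≤ 4 * (1+R)^2 := by positivity
    nlinarith [hmono_y_b, hmono_z_b]
  -- first term
  have hterm1 : (∫ x in J, ‖z x + (A x - B x) (y x)‖ ^ 2) ≤ 2*Qz + 2*M₀^2*Qy := by
    have hInt : Integrable (fun x => 2*‖z x‖^2 + 2*M₀^2*‖y x‖^2) (volume.restrict J) :=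
      (hz2.const_mul 2).add (hy2.const_mul _)
    have hle : (∫ x in J, ‖z x + (A x - B x) (y x)‖ ^ 2) ≤
        ∫ x in J, (2*‖z x‖^2 + 2*M₀^2*‖y x‖^2) := by
      refine integral_mono_of_nonneg (Filter.Eventually.of_forall fun x => sq_nonneg _) hInt ?_
      filter_upwards [hM] with x hx
      have h1 : ‖z x + (A x - B x) (y x)‖ ≤ ‖z x‖ + M₀ * ‖y x‖ := by
        refine (norm_add_le _ _).trans (add_le_add le_rfl ?_)
        exact ((A x - B x).le_opNorm _).trans
          (mul_le_mul_of_nonneg_right hx (norm_nonneg _))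
      have h2 := pow_le_pow_left₀ (norm_nonneg _) h1 2
      nlinarith [sq_nonneg (‖z x‖ - M₀ * ‖y x‖)]
    have heq2 : (∫ x in J, (2*‖z x‖^2 + 2*M₀^2*‖y x‖^2)) = 2*Qz + 2*M₀^2*Qy := by
      rw [integral_add (hz2.const_mul 2) (hy2.const_mul _), MeasureTheory.integral_const_mul,
        MeasureTheory.integral_const_mul]
    linarith [heq2 ▸ hle]
  -- boundary term
  have hbd : ‖Rm (y a) + Rp (y b)‖ ^ 2 ≤ 2*‖Rm‖^2*‖y a‖^2 + 2*‖Rp‖^2*‖y b‖^2 := by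
    have h1 : ‖Rm (y a) + Rp (y b)‖ ≤ ‖Rm‖*‖y a‖ + ‖Rp‖*‖y b‖ :=
      (norm_add_le _ _).trans (add_le_add (Rm.le_opNorm _) (Rp.le_opNorm _))
    have h2 := pow_le_pow_left₀ (norm_nonneg _) h1 2
    nlinarith [sq_nonneg (‖Rm‖*‖y a‖ - ‖Rp‖*‖y b‖)]
  -- M₀ ≥ 0
  have hM0 : 0 ≤ M₀ := by
    have hvol : volume J ≠ 0 := by
      rw [hJdef, Real.volume_Icc]
      simp only [ne_eq, ENNReal.ofReal_eq_zero, not_le]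
      linarith
    have hne : volume.restrict J ≠ 0 := by
      simpa [Measure.restrict_eq_zero] using hvol
    have : (ae (volume.restrict J)).NeBot := ae_neBot.2 hne
    obtain ⟨x, hx⟩ := hM.exists
    exact le_trans (norm_nonneg _) hx
  -- combine
  have e1 : 2*‖Rm‖^2*‖y a‖^2 ≤ 2*‖Rm‖^2*(4*(1+R)^2*(Qy+Qz)) :=
    mul_le_mul_of_nonneg_left hya (by positivity)
  have e2 : 2*‖Rp‖^2*‖y b‖^2 ≤ 2*‖Rp‖^2*(4*(1+R)^2*(Qy+Qz)) :=
    mul_le_mul_of_nonneg_left hyb (by positivity)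
  have hP1 : 1 ≤ (1+R)^2 := by nlinarith
  have hQ0 : 0 ≤ Qy + Qz := by linarith
  have goal2 : 2*Qz + 2*M₀^2*Qy + (2*‖Rm‖^2*‖y a‖^2 + 2*‖Rp‖^2*‖y b‖^2) ≤
      8*(1+R)^2 * (1 + M₀^2 + ‖Rm‖^2 + ‖Rp‖^2) * (Qy + Qz) := by
    nlinarith [e1, e2, hQy0, hQz0, hP1, hQ0, sq_nonneg M₀, sq_nonneg ‖Rm‖, sq_nonneg ‖Rp‖,
      mul_nonneg (sub_nonneg.2 hP1) hQz0,
      mul_nonneg (mul_nonneg (sub_nonneg.2 hP1) (sq_nonneg M₀)) hQ0,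
      mul_nonneg (sq_nonneg M₀) hQz0,
      mul_nonneg (sub_nonneg.2 hP1) hQ0,
      mul_nonneg (sq_nonneg ‖Rm‖) hQ0, mul_nonneg (sq_nonneg ‖Rp‖) hQ0]
  linarith [hterm1, hbd]
end
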